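/- arXiv:1011.4758 — 3 statements merged into one kernel-verified Lean document; each statement's English description precedes it below -/
import Mathlib

section
/- Let H be a triangular Hopf algebra with R-matrix R and let A be a left H-module algebra. Define the R-commutator [a,b]_R := ab − Σ (R₂•b)(R₁•a) for a,b ∈ A. Then [·,·]_R is H-equivariant (h•[a,b]_R = Σ [h⁽¹⁾•a, h⁽²⁾•b]_R for all h ∈ H), satisfies the braided Jacobi identity [a,[b,c]_R]_R = [[a,b]_R,c]_R + Σ [R₂•b,[R₁•a,c]_R]_R, and the braided antisymmetry Σ [R₂•a, R₁•b]_R = −[b,a]_R, for all a,b,c ∈ A. -/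
open TensorProduct

set_option synthInstance.maxHeartbeats 1000000
set_option maxHeartbeats 1000000
set_option linter.unusedVariables false

noncomputable section

variable (k : Type*) [Field k] (H : Type*) [Ring H] [HopfAlgebra k H]

/-- The comultiplication of `H` as a linear map. -/
noncomputable def comulL : H →ₗ[k] H ⊗[k] H := Coalgebra.comul

/-- The counit of `H` as a linear map. -/
noncomputable def counitL : H →ₗ[k] k := Coalgebra.counit

/-- The antipode of `H`. -/
noncomputable def anti : H →ₗ[k] H := HopfAlgebra.antipode (R := k)

/-- `F` together with its inverse `Finv` is a twisting (Drinfeld) cocycle: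
`F` is invertible, `(Δ⊗id)(F)·(F⊗1) = (id⊗Δ)(F)·(1⊗F)` and `(ε⊗id)(F) = 1 = (id⊗ε)(F)`. -/
def IsCocycle (F Finv : H ⊗[k] H) : Prop :=
  F * Finv = 1 ∧ Finv * F = 1 ∧
  (TensorProduct.assoc k H H H) ((TensorProduct.map (comulL k H) LinearMap.id F) * (F ⊗ₜ 1))
    = (TensorProduct.map LinearMap.id (comulL k H) F) * ((1 : H) ⊗ₜ F) ∧
  (TensorProduct.lid k H) (TensorProduct.map (counitL k H) LinearMap.id F) = 1 ∧
  (TensorProduct.rid k H) (TensorProduct.map LinearMap.id (counitL k H) F) = 1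

/-- `ϑ = Σ γ(F₁)F₂`. -/
noncomputable def theta (F : H ⊗[k] H) : H :=
  LinearMap.mul' k H (TensorProduct.map (anti k H) LinearMap.id F)

/-- `ζ = Σ F̄₂ γ⁻¹(F̄₁)`, where `γinv` is the inverse of the antipode and `Finv = Σ F̄₁⊗F̄₂`. -/
noncomputable def zeta (γinv : H →ₗ[k] H) (Finv : H ⊗[k] H) : H :=
  LinearMap.mul' k H (TensorProduct.map LinearMap.id γinv ((TensorProduct.comm k H H) Finv))

/-- `R` (with inverse `Rinv`) is a triangular structure: `R` is invertible,
`R Δ(h) = Δᵒᵖ(h) R`, the two hexagon identities `(Δ⊗id)(R) = R₁₃R₂₃`,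
`(id⊗Δ)(R) = R₁₃R₁₂` hold, and `R₂₁ R = 1`. -/
def IsTriangular (R Rinv : H ⊗[k] H) : Prop :=
  R * Rinv = 1 ∧ Rinv * R = 1 ∧
  (∀ h : H, R * comulL k H h = (TensorProduct.comm k H H) (comulL k H h) * R) ∧
  (TensorProduct.assoc k H H H) (TensorProduct.map (comulL k H) LinearMap.id R)
    = (TensorProduct.map LinearMap.id (TensorProduct.mk k H H 1) R) * ((1 : H) ⊗ₜ R) ∧
  (TensorProduct.map LinearMap.id (comulL k H) R)
    = (TensorProduct.map LinearMap.id (TensorProduct.mk k H H 1) R) *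
      ((TensorProduct.assoc k H H H) (R ⊗ₜ (1 : H))) ∧
  ((TensorProduct.comm k H H) R) * R = 1

/-- `bcomp U V x y = (U x) ∘ₗ (V y)`, bilinearly in `x, y`. -/
noncomputable def bcomp {A B C : Type*} [AddCommMonoid A] [AddCommMonoid B] [AddCommMonoid C]
    [Module k A] [Module k B] [Module k C]
    (U : H →ₗ[k] B →ₗ[k] C) (V : H →ₗ[k] A →ₗ[k] B) : H →ₗ[k] H →ₗ[k] (A →ₗ[k] C) :=
  ((((LinearMap.llcomp k A B C) ∘ₗ U).flip) ∘ₗ V).flip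

/-- Given an action `α` of `H` on `M`, the induced action of `H ⊗ H` on `M ⊗ M`:
`pairAct α (x ⊗ y) (a ⊗ b) = (α x a) ⊗ (α y b)`. -/
noncomputable def pairAct {M : Type*} [AddCommMonoid M] [Module k M]
    (α : H →ₗ[k] M →ₗ[k] M) : H ⊗[k] H →ₗ[k] (M ⊗[k] M →ₗ[k] M ⊗[k] M) :=
  (TensorProduct.homTensorHomMap (RingHom.id k) M M M M) ∘ₗ (TensorProduct.map α α)

/-- `sandwich α β (x ⊗ y) a = α x * a * β y`. -/
noncomputable def sandwich {E : Type*} [Ring E] [Algebra k E]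
    (α β : H →ₗ[k] E) : H ⊗[k] H →ₗ[k] E →ₗ[k] E :=
  TensorProduct.lift (bcomp k H ((LinearMap.mul k E) ∘ₗ α) ((LinearMap.mul k E).flip ∘ₗ β))

/-- The adjoint action associated with `ρ : H →ₗ E`:
`adAct ρ h a = Σ ρ(h⁽¹⁾) a ρ(γ(h⁽²⁾))`. -/
noncomputable def adAct {E : Type*} [Ring E] [Algebra k E]
    (ρ : H →ₗ[k] E) : H →ₗ[k] E →ₗ[k] E :=
  (sandwich k H ρ (ρ ∘ₗ anti k H)) ∘ₗ comulL k H

/-- The twisted comultiplication `Δ̃(h) = F⁻¹ Δ(h) F`. -/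
noncomputable def comulTw (F Finv : H ⊗[k] H) : H →ₗ[k] H ⊗[k] H :=
  (LinearMap.mulRight k F) ∘ₗ (LinearMap.mulLeft k Finv) ∘ₗ comulL k H

/-- The twisted antipode `γ̃(h) = ϑ⁻¹ γ(h) ϑ`. -/
noncomputable def antiTw (ϑ ϑinv : H) : H →ₗ[k] H :=
  (LinearMap.mulRight k ϑ) ∘ₗ (LinearMap.mulLeft k ϑinv) ∘ₗ anti k H

variable (A : Type*) [Ring A] [Algebra k A]

/-- `act` makes `A` a left `H`-module algebra:
`act` is a representation of `H`, `h•(ab) = Σ (h⁽¹⁾•a)(h⁽²⁾•b)` and `h•1 = ε(h)1`. -/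
def IsModAlg (act : H →ₗ[k] Module.End k A) : Prop :=
  act 1 = 1 ∧ (∀ g h : H, act (g * h) = act g * act h) ∧
  (∀ (h : H) (a b : A),
    act h (a * b) = LinearMap.mul' k A ((pairAct k H act) (comulL k H h) (a ⊗ₜ b))) ∧
  (∀ h : H, act h 1 = (counitL k H h) • (1 : A))

/-- The adjoint-type action of `H` on `End_k(A)`: `h.X = Σ ρ(h⁽¹⁾) ∘ X ∘ ρ(γ(h⁽²⁾))`. -/
noncomputable def dotAct (act : H →ₗ[k] Module.End k A) :
    H →ₗ[k] Module.End k A →ₗ[k] Module.End k A :=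
  (sandwich k H (E := Module.End k A) act (act ∘ₗ anti k H)) ∘ₗ comulL k H

section RCommutator

variable (act : H →ₗ[k] Module.End k A) (R : H ⊗[k] H)

/-- The `R`-commutator `[a,b]_R = ab − Σ (R₂•b)(R₁•a)` as a linear map on `A ⊗ A`. -/
noncomputable def rBracket : A ⊗[k] A →ₗ[k] A :=
  (LinearMap.mul' k A) -
    ((LinearMap.mul' k A) ∘ₗ ((pairAct k H act) ((TensorProduct.comm k H H) R)) ∘ₗ
      (TensorProduct.comm k A A).toLinearMap)

section RAux
variable {K : Type*} [Field K] {HH : Type*} [Ring HH] [HopfAlgebra K HH]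
variable {AA : Type*} [Ring AA] [Algebra K AA]

/-! ### basic gadgets -/

lemma pairAct_tmul (ac : HH →ₗ[K] Module.End K AA) (x y : HH) :
    pairAct K HH ac (x ⊗ₜ y) = TensorProduct.map (ac x) (ac y) := by
  simp [pairAct]

noncomputable def trip (ac : HH →ₗ[K] Module.End K AA) :
    (HH ⊗[K] (HH ⊗[K] HH)) →ₗ[K] (AA ⊗[K] (AA ⊗[K] AA)) →ₗ[K] (AA ⊗[K] (AA ⊗[K] AA)) :=
  (TensorProduct.homTensorHomMap (RingHom.id K) AA (AA ⊗[K] AA) AA (AA ⊗[K] AA)) ∘ₗ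
    (TensorProduct.map ac (pairAct K HH ac))

lemma trip_tmul (ac : HH →ₗ[K] Module.End K AA) (x : HH) (y : HH ⊗[K] HH) :
    trip ac (x ⊗ₜ y) = TensorProduct.map (ac x) (pairAct K HH ac y) := by
  simp [trip]

noncomputable def Phi (ac : HH →ₗ[K] Module.End K AA) (u v w : AA) :
    (HH ⊗[K] (HH ⊗[K] HH)) →ₗ[K] AA :=
  ((LinearMap.mul' K AA) ∘ₗ (TensorProduct.map LinearMap.id (LinearMap.mul' K AA))) ∘ₗ
    (LinearMap.applyₗ (u ⊗ₜ (v ⊗ₜ w))) ∘ₗ trip ac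

lemma Phi_tmul (ac : HH →ₗ[K] Module.End K AA) (u v w : AA) (x y z : HH) :
    Phi ac u v w (x ⊗ₜ (y ⊗ₜ z)) = ac x u * (ac y v * ac z w) := by
  simp [Phi, trip_tmul, pairAct_tmul]

lemma Phi_one (ac : HH →ₗ[K] Module.End K AA) (hact : ac 1 = 1) (u v w : AA) :
    Phi ac u v w 1 = u * (v * w) := by
  rw [show (1 : HH ⊗[K] (HH ⊗[K] HH)) = (1 : HH) ⊗ₜ ((1:HH) ⊗ₜ (1:HH)) by
    rw [Algebra.TensorProduct.one_def, Algebra.TensorProduct.one_def], Phi_tmul, hact]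
  rfl

/-! ### comm lemmas -/

lemma commH_mul (x y : HH ⊗[K] HH) :
    (TensorProduct.comm K HH HH) (x * y)
      = (TensorProduct.comm K HH HH) x * (TensorProduct.comm K HH HH) y :=
  map_mul (Algebra.TensorProduct.comm K HH HH) x y

lemma commH_one : (TensorProduct.comm K HH HH) (1 : HH ⊗[K] HH) = 1 :=
  map_one (Algebra.TensorProduct.comm K HH HH)

lemma tcomm_tcomm {M N : Type*} [AddCommMonoid M] [AddCommMonoid N] [Module K M] [Module K N]
    (x : M ⊗[K] N) :
    (TensorProduct.comm K N M) ((TensorProduct.comm K M N) x) = x := by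
  induction x using TensorProduct.induction_on with
  | zero => simp
  | tmul a b => simp
  | add u v hu hv => simp [map_add, hu, hv]

lemma comm_pairAct (ac : HH →ₗ[K] Module.End K AA) (x : HH ⊗[K] HH) (w : AA ⊗[K] AA) :
    (TensorProduct.comm K AA AA) (pairAct K HH ac x w)
      = pairAct K HH ac ((TensorProduct.comm K HH HH) x) ((TensorProduct.comm K AA AA) w) := by
  induction x using TensorProduct.induction_on with
  | zero => simp
  | tmul g h =>
    induction w using TensorProduct.induction_on with
    | zero => simp
    | tmul a b => simp [pairAct_tmul]
    | add u v hu hv => simp only [map_add, hu, hv]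
  | add u v hu hv => simp only [map_add, LinearMap.add_apply, hu, hv]

lemma pairAct_one_apply (ac : HH →ₗ[K] Module.End K AA) (hone : ac 1 = 1) (w : AA ⊗[K] AA) :
    pairAct K HH ac 1 w = w := by
  rw [Algebra.TensorProduct.one_def, pairAct_tmul, hone]
  simp [TensorProduct.map_id]

lemma pairAct_mul_apply (ac : HH →ₗ[K] Module.End K AA) (hmul : ∀ g h : HH, ac (g*h) = ac g * ac h)
    (x y : HH ⊗[K] HH) (w : AA ⊗[K] AA) :
    pairAct K HH ac (x * y) w = pairAct K HH ac x (pairAct K HH ac y w) := by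
  induction x using TensorProduct.induction_on with
  | zero => simp
  | tmul g h =>
    induction y using TensorProduct.induction_on with
    | zero => simp
    | tmul g' h' =>
      rw [Algebra.TensorProduct.tmul_mul_tmul]
      induction w using TensorProduct.induction_on with
      | zero => simp
      | tmul a b => simp [pairAct_tmul, hmul, Module.End.mul_apply]
      | add u v hu hv => simp only [map_add, hu, hv]
    | add u v hu hv => simp only [mul_add, map_add, LinearMap.add_apply, hu, hv]
  | add u v hu hv => simp only [add_mul, map_add, LinearMap.add_apply, hu, hv]

/-! ### module algebra / bracket operator lemmas -/

lemma mul_equivariant (ac : HH →ₗ[K] Module.End K AA)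
    (hma : ∀ (h : HH) (a b : AA),
      ac h (a * b) = LinearMap.mul' K AA ((pairAct K HH ac) (comulL K HH h) (a ⊗ₜ b)))
    (h : HH) (w : AA ⊗[K] AA) :
    ac h (LinearMap.mul' K AA w)
      = LinearMap.mul' K AA (pairAct K HH ac (comulL K HH h) w) := by
  induction w using TensorProduct.induction_on with
  | zero => simp
  | tmul a b => simpa using hma h a b
  | add u v hu hv => simp only [map_add, hu, hv]

lemma rBracket_apply (ac : HH →ₗ[K] Module.End K AA) (Rr : HH ⊗[K] HH) (w : AA ⊗[K] AA) :
    rBracket K HH AA ac Rr w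
      = LinearMap.mul' K AA w -
        LinearMap.mul' K AA
          (pairAct K HH ac ((TensorProduct.comm K HH HH) Rr) ((TensorProduct.comm K AA AA) w)) := by
  simp [rBracket]


/-! ### equivariance and antisymmetry -/

lemma equiv_L (ac : HH →ₗ[K] Module.End K AA) (Rr : HH ⊗[K] HH)
    (hone : ac 1 = 1) (hmul : ∀ g h : HH, ac (g*h) = ac g * ac h)
    (hma : ∀ (h : HH) (a b : AA),
      ac h (a * b) = LinearMap.mul' K AA ((pairAct K HH ac) (comulL K HH h) (a ⊗ₜ b)))
    (hcom : ∀ h : HH, Rr * comulL K HH h = (TensorProduct.comm K HH HH) (comulL K HH h) * Rr)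
    (h : HH) (w : AA ⊗[K] AA) :
    ac h (rBracket K HH AA ac Rr w)
      = rBracket K HH AA ac Rr (pairAct K HH ac (comulL K HH h) w) := by
  have key : comulL K HH h * (TensorProduct.comm K HH HH) Rr
      = (TensorProduct.comm K HH HH) Rr
          * (TensorProduct.comm K HH HH) (comulL K HH h) := by
    have := congrArg (TensorProduct.comm K HH HH) (hcom h)
    rw [commH_mul, commH_mul, tcomm_tcomm] at this
    exact this.symm
  rw [rBracket_apply, rBracket_apply, map_sub,
    mul_equivariant ac hma, mul_equivariant ac hma,
    ← pairAct_mul_apply ac hmul, key, pairAct_mul_apply ac hmul, comm_pairAct]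

lemma antisym_L (ac : HH →ₗ[K] Module.End K AA) (Rr : HH ⊗[K] HH)
    (hone : ac 1 = 1) (hmul : ∀ g h : HH, ac (g*h) = ac g * ac h)
    (hsym : ((TensorProduct.comm K HH HH) Rr) * Rr = 1)
    (w : AA ⊗[K] AA) :
    rBracket K HH AA ac Rr (pairAct K HH ac ((TensorProduct.comm K HH HH) Rr) w)
      = - rBracket K HH AA ac Rr ((TensorProduct.comm K AA AA) w) := by
  have h1 : (TensorProduct.comm K AA AA) (pairAct K HH ac ((TensorProduct.comm K HH HH) Rr) w)
      = pairAct K HH ac Rr ((TensorProduct.comm K AA AA) w) := by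
    rw [comm_pairAct, tcomm_tcomm]
  rw [rBracket_apply, rBracket_apply, h1, ← pairAct_mul_apply ac hmul, hsym,
    pairAct_one_apply ac hone, tcomm_tcomm, neg_sub]

-- permutations of HH ⊗ (HH ⊗ HH) as algebra equivalences
noncomputable def pA : (HH ⊗[K] (HH ⊗[K] HH)) ≃ₐ[K] HH ⊗[K] (HH ⊗[K] HH) :=
  (Algebra.TensorProduct.assoc K K K HH HH HH).symm.trans
    ((Algebra.TensorProduct.congr (Algebra.TensorProduct.comm K HH HH) AlgEquiv.refl).trans
      (Algebra.TensorProduct.assoc K K K HH HH HH))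

noncomputable def qA : (HH ⊗[K] (HH ⊗[K] HH)) ≃ₐ[K] HH ⊗[K] (HH ⊗[K] HH) :=
  Algebra.TensorProduct.congr AlgEquiv.refl (Algebra.TensorProduct.comm K HH HH)

noncomputable def cA : (HH ⊗[K] (HH ⊗[K] HH)) ≃ₐ[K] HH ⊗[K] (HH ⊗[K] HH) :=
  (Algebra.TensorProduct.comm K HH (HH ⊗[K] HH)).trans (Algebra.TensorProduct.assoc K K K HH HH HH)

lemma pA_tmul (x y z : HH) : pA (x ⊗ₜ[K] (y ⊗ₜ[K] z)) = y ⊗ₜ[K] (x ⊗ₜ[K] z) := by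
  simp [pA, Algebra.TensorProduct.congr]

lemma qA_tmul (x y z : HH) : qA (x ⊗ₜ[K] (y ⊗ₜ[K] z)) = x ⊗ₜ[K] (z ⊗ₜ[K] y) := by
  simp [qA, Algebra.TensorProduct.congr]

lemma cA_tmul (x y z : HH) : cA (x ⊗ₜ[K] (y ⊗ₜ[K] z)) = y ⊗ₜ[K] (z ⊗ₜ[K] x) := by
  simp [cA]

noncomputable def cA2 : (HH ⊗[K] (HH ⊗[K] HH)) ≃ₐ[K] HH ⊗[K] (HH ⊗[K] HH) := cA.trans cA

lemma cA2_tmul (x y z : HH) : cA2 (x ⊗ₜ[K] (y ⊗ₜ[K] z)) = z ⊗ₜ[K] (x ⊗ₜ[K] y) := by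
  simp [cA2, cA_tmul]

-- embeddings
noncomputable def e12 : (HH ⊗[K] HH) →ₐ[K] HH ⊗[K] (HH ⊗[K] HH) :=
  (Algebra.TensorProduct.assoc K K K HH HH HH).toAlgHom.comp Algebra.TensorProduct.includeLeft

noncomputable def e23 : (HH ⊗[K] HH) →ₐ[K] HH ⊗[K] (HH ⊗[K] HH) :=
  Algebra.TensorProduct.includeRight

noncomputable def e13 : (HH ⊗[K] HH) →ₐ[K] HH ⊗[K] (HH ⊗[K] HH) :=
  qA.toAlgHom.comp e12

lemma e12_tmul (x y : HH) : (e12 (x ⊗ₜ[K] y) : HH ⊗[K] (HH ⊗[K] HH)) = x ⊗ₜ (y ⊗ₜ 1) := by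
  simp [e12]

lemma e23_tmul (x y : HH) : (e23 (x ⊗ₜ[K] y) : HH ⊗[K] (HH ⊗[K] HH)) = 1 ⊗ₜ (x ⊗ₜ y) := rfl

lemma e13_tmul (x y : HH) : (e13 (x ⊗ₜ[K] y) : HH ⊗[K] (HH ⊗[K] HH)) = x ⊗ₜ (1 ⊗ₜ y) := by
  simp [e13, e12_tmul, qA_tmul]


/-! ### bridging lemmas -/

noncomputable def alA : ((HH ⊗[K] HH) ⊗[K] HH) ≃ₐ[K] HH ⊗[K] (HH ⊗[K] HH) :=
  Algebra.TensorProduct.assoc K K K HH HH HH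

lemma brAssoc (y : (HH ⊗[K] HH) ⊗[K] HH) :
    (TensorProduct.assoc K HH HH HH) y = alA y := by
  induction y using TensorProduct.induction_on with
  | zero => simp
  | tmul x z =>
    induction x using TensorProduct.induction_on with
    | zero => simp
    | tmul a b => simp [alA]
    | add u v hu hv => simp only [add_tmul, map_add, hu, hv]
  | add u v hu hv => simp only [map_add, hu, hv]

lemma brMk (x : HH ⊗[K] HH) :
    TensorProduct.map LinearMap.id (TensorProduct.mk K HH HH 1) x = e13 x := by
  induction x using TensorProduct.induction_on with
  | zero => simp
  | tmul a b => simp [e13_tmul]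
  | add u v hu hv => simp only [map_add, hu, hv]

lemma brE12 (x : HH ⊗[K] HH) : alA (x ⊗ₜ (1 : HH)) = e12 x := by
  induction x using TensorProduct.induction_on with
  | zero => simp
  | tmul a b => simp [alA, e12_tmul]
  | add u v hu hv => simp only [add_tmul, map_add, hu, hv]

lemma br_flip (y : HH ⊗[K] HH) (g : HH) : alA (y ⊗ₜ g) = cA (g ⊗ₜ y) := by
  induction y using TensorProduct.induction_on with
  | zero => simp
  | tmul a b => simp [alA, cA_tmul]
  | add u v hu hv => simp only [add_tmul, tmul_add, map_add, hu, hv]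

lemma br_a (f : HH →ₗ[K] HH ⊗[K] HH) (x : HH ⊗[K] HH) :
    alA (TensorProduct.map f LinearMap.id ((TensorProduct.comm K HH HH) x))
      = cA (TensorProduct.map LinearMap.id f x) := by
  induction x using TensorProduct.induction_on with
  | zero => simp
  | tmul g h => simpa using br_flip (f h) g
  | add u v hu hv => simp only [map_add, hu, hv]

lemma cA2_cA (z : HH ⊗[K] (HH ⊗[K] HH)) : cA2 (cA z) = z := by
  induction z using TensorProduct.induction_on with
  | zero => simp
  | tmul x yz =>
    induction yz using TensorProduct.induction_on with
    | zero => simp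
    | tmul a b => simp [cA_tmul, cA2_tmul]
    | add u v hu hv => simp only [tmul_add, map_add, hu, hv]
  | add u v hu hv => simp only [map_add, hu, hv]

lemma br_b (f : HH →ₗ[K] HH ⊗[K] HH) (x : HH ⊗[K] HH) :
    TensorProduct.map LinearMap.id f ((TensorProduct.comm K HH HH) x)
      = cA2 (alA (TensorProduct.map f LinearMap.id x)) := by
  induction x using TensorProduct.induction_on with
  | zero => simp
  | tmul g h =>
    simp only [TensorProduct.comm_tmul, TensorProduct.map_tmul, LinearMap.id_coe, id_eq]
    rw [br_flip, cA2_cA]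
  | add u v hu hv => simp only [map_add, hu, hv]

lemma sub2' (y : HH ⊗[K] HH) (h : HH) :
    alA (((TensorProduct.comm K HH HH) y) ⊗ₜ h) = pA (alA (y ⊗ₜ h)) := by
  induction y using TensorProduct.induction_on with
  | zero => simp
  | tmul a b => simp [alA, pA_tmul]
  | add u v hu hv => simp only [map_add, add_tmul, hu, hv]

lemma br_pa (f : HH →ₗ[K] HH ⊗[K] HH) (x : HH ⊗[K] HH) :
    alA (TensorProduct.map ((TensorProduct.comm K HH HH).toLinearMap ∘ₗ f) LinearMap.id x)
      = pA (alA (TensorProduct.map f LinearMap.id x)) := by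
  induction x using TensorProduct.induction_on with
  | zero => simp
  | tmul g h => simpa using sub2' (f g) h
  | add u v hu hv => simp only [map_add, hu, hv]

/-! ### permutation/embedding compatibilities -/

lemma pA_e13 (x : HH ⊗[K] HH) : pA (e13 x) = e23 x := by
  induction x using TensorProduct.induction_on with
  | zero => simp
  | tmul a b => simp [e13_tmul, e23_tmul, pA_tmul]
  | add u v hu hv => simp only [map_add, hu, hv]

lemma pA_e23 (x : HH ⊗[K] HH) : pA (e23 x) = e13 x := by
  induction x using TensorProduct.induction_on with
  | zero => simp
  | tmul a b => simp [e13_tmul, e23_tmul, pA_tmul]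
  | add u v hu hv => simp only [map_add, hu, hv]

lemma qA_e12 (x : HH ⊗[K] HH) : qA (e12 x) = e13 x := by
  induction x using TensorProduct.induction_on with
  | zero => simp
  | tmul a b => simp [e13_tmul, e12_tmul, qA_tmul]
  | add u v hu hv => simp only [map_add, hu, hv]

lemma qA_e13 (x : HH ⊗[K] HH) : qA (e13 x) = e12 x := by
  induction x using TensorProduct.induction_on with
  | zero => simp
  | tmul a b => simp [e13_tmul, e12_tmul, qA_tmul]
  | add u v hu hv => simp only [map_add, hu, hv]

lemma qA_tmul' (g : HH) (y : HH ⊗[K] HH) :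
    qA (g ⊗ₜ y) = g ⊗ₜ ((TensorProduct.comm K HH HH) y) := by
  induction y using TensorProduct.induction_on with
  | zero => simp
  | tmul a b => simp [qA_tmul]
  | add u v hu hv => simp only [tmul_add, map_add, hu, hv]

lemma cA_e12 (x : HH ⊗[K] HH) : cA (e12 x) = e13 ((TensorProduct.comm K HH HH) x) := by
  induction x using TensorProduct.induction_on with
  | zero => simp
  | tmul a b => simp [e12_tmul, e13_tmul, cA_tmul]
  | add u v hu hv => simp only [map_add, hu, hv]

lemma cA_e13 (x : HH ⊗[K] HH) : cA (e13 x) = e23 ((TensorProduct.comm K HH HH) x) := by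
  induction x using TensorProduct.induction_on with
  | zero => simp
  | tmul a b => simp [e23_tmul, e13_tmul, cA_tmul]
  | add u v hu hv => simp only [map_add, hu, hv]

lemma cA2_e13 (x : HH ⊗[K] HH) : cA2 (e13 x) = e12 ((TensorProduct.comm K HH HH) x) := by
  induction x using TensorProduct.induction_on with
  | zero => simp
  | tmul a b => simp [e12_tmul, e13_tmul, cA2_tmul]
  | add u v hu hv => simp only [map_add, hu, hv]

lemma cA2_e23 (x : HH ⊗[K] HH) : cA2 (e23 x) = e13 ((TensorProduct.comm K HH HH) x) := by
  induction x using TensorProduct.induction_on with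
  | zero => simp
  | tmul a b => simp [e23_tmul, e13_tmul, cA2_tmul]
  | add u v hu hv => simp only [map_add, hu, hv]

/-! ### hexagons and Yang–Baxter -/

section Hex
variable (Rr : HH ⊗[K] HH)

local notation "τ" => TensorProduct.comm K HH HH
local notation "Δ" => comulL K HH

lemma hex1'
    (h4 : (TensorProduct.assoc K HH HH HH) (TensorProduct.map (comulL K HH) LinearMap.id Rr)
      = (TensorProduct.map LinearMap.id (TensorProduct.mk K HH HH 1) Rr) * ((1 : HH) ⊗ₜ Rr)) :
    alA (TensorProduct.map Δ LinearMap.id Rr) = e13 Rr * e23 Rr := by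
  rw [← brAssoc, h4, brMk]; rfl

lemma hex2'
    (h5 : (TensorProduct.map LinearMap.id (comulL K HH) Rr)
      = (TensorProduct.map LinearMap.id (TensorProduct.mk K HH HH 1) Rr) *
        ((TensorProduct.assoc K HH HH HH) (Rr ⊗ₜ (1 : HH)))) :
    TensorProduct.map LinearMap.id Δ Rr = e13 Rr * e12 Rr := by
  rw [h5, brMk, brAssoc, brE12]

lemma RS_one (hsym : (τ Rr) * Rr = 1) : Rr * τ Rr = 1 := by
  have := congrArg (TensorProduct.comm K HH HH) hsym
  rwa [commH_mul, tcomm_tcomm, commH_one] at this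

lemma D1'
    (h5 : (TensorProduct.map LinearMap.id (comulL K HH) Rr)
      = (TensorProduct.map LinearMap.id (TensorProduct.mk K HH HH 1) Rr) *
        ((TensorProduct.assoc K HH HH HH) (Rr ⊗ₜ (1 : HH)))) :
    alA (TensorProduct.map Δ LinearMap.id (τ Rr)) = e23 (τ Rr) * e13 (τ Rr) := by
  rw [br_a, hex2' Rr h5, map_mul, cA_e13, cA_e12]

lemma D2'
    (h4 : (TensorProduct.assoc K HH HH HH) (TensorProduct.map (comulL K HH) LinearMap.id Rr)
      = (TensorProduct.map LinearMap.id (TensorProduct.mk K HH HH 1) Rr) * ((1 : HH) ⊗ₜ Rr)) :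
    TensorProduct.map LinearMap.id Δ (τ Rr) = e12 (τ Rr) * e13 (τ Rr) := by
  rw [br_b, hex1' Rr h4, map_mul, cA2_e13, cA2_e23]

lemma sub1 (hcom : ∀ h : HH, Rr * comulL K HH h = τ (comulL K HH h) * Rr) (w : HH ⊗[K] HH) :
    ((Rr ⊗ₜ (1:HH)) * (TensorProduct.map Δ LinearMap.id w) : (HH ⊗[K] HH) ⊗[K] HH)
      = (TensorProduct.map ((TensorProduct.comm K HH HH : HH ⊗[K] HH →ₗ[K] HH ⊗[K] HH) ∘ₗ Δ) LinearMap.id w) * (Rr ⊗ₜ 1) := by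
  induction w using TensorProduct.induction_on with
  | zero => simp
  | tmul g h =>
    simp only [TensorProduct.map_tmul, LinearMap.id_coe, id_eq, LinearMap.coe_comp,
      Function.comp_apply, LinearEquiv.coe_coe, Algebra.TensorProduct.tmul_mul_tmul,
      hcom g, one_mul, mul_one]
  | add u v hu hv => simp only [map_add, mul_add, add_mul, hu, hv]

lemma YBE_B
    (hcom : ∀ h : HH, Rr * comulL K HH h = τ (comulL K HH h) * Rr)
    (h4 : (TensorProduct.assoc K HH HH HH) (TensorProduct.map (comulL K HH) LinearMap.id Rr)
      = (TensorProduct.map LinearMap.id (TensorProduct.mk K HH HH 1) Rr) * ((1 : HH) ⊗ₜ Rr)) :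
    e12 Rr * (e13 Rr * e23 Rr) = e23 Rr * (e13 Rr * e12 Rr) := by
  have step : e12 Rr * (e13 Rr * e23 Rr) = pA (alA (TensorProduct.map Δ LinearMap.id Rr)) * e12 Rr := by
    rw [← hex1' Rr h4, ← brE12, ← map_mul, sub1 Rr hcom, map_mul, brE12, br_pa]
  rw [step, hex1' Rr h4, map_mul, pA_e13, pA_e23, mul_assoc]

lemma YBE_A
    (hcom : ∀ h : HH, Rr * comulL K HH h = τ (comulL K HH h) * Rr)
    (hsym : (τ Rr) * Rr = 1)
    (h4 : (TensorProduct.assoc K HH HH HH) (TensorProduct.map (comulL K HH) LinearMap.id Rr)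
      = (TensorProduct.map LinearMap.id (TensorProduct.mk K HH HH 1) Rr) * ((1 : HH) ⊗ₜ Rr)) :
    e12 (τ Rr) * (e13 (τ Rr) * e23 (τ Rr)) = e23 (τ Rr) * (e13 (τ Rr) * e12 (τ Rr)) := by
  have hRS : Rr * τ Rr = 1 := RS_one Rr hsym
  have e_cancel : ∀ (e : (HH ⊗[K] HH) →ₐ[K] HH ⊗[K] (HH ⊗[K] HH)),
      e (τ Rr) * e Rr = 1 ∧ e Rr * e (τ Rr) = 1 := by
    intro e
    constructor
    · rw [← map_mul, hsym, map_one]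
    · rw [← map_mul, hRS, map_one]
  have h1 : (e23 (τ Rr) * (e13 (τ Rr) * e12 (τ Rr))) * (e12 Rr * (e13 Rr * e23 Rr)) = 1 := by
    rw [show (e23 (τ Rr) * (e13 (τ Rr) * e12 (τ Rr))) * (e12 Rr * (e13 Rr * e23 Rr))
        = e23 (τ Rr) * (e13 (τ Rr) * ((e12 (τ Rr) * e12 Rr) * (e13 Rr * e23 Rr))) by simp only [mul_assoc],
      (e_cancel e12).1, one_mul, show e13 (τ Rr) * (e13 Rr * e23 Rr) = (e13 (τ Rr) * e13 Rr) * e23 Rr by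
        simp only [mul_assoc], (e_cancel e13).1, one_mul, (e_cancel e23).1]
  have h2 : (e12 Rr * (e13 Rr * e23 Rr)) * (e12 (τ Rr) * (e13 (τ Rr) * e23 (τ Rr))) = 1 := by
    rw [YBE_B Rr hcom h4,
      show (e23 Rr * (e13 Rr * e12 Rr)) * (e12 (τ Rr) * (e13 (τ Rr) * e23 (τ Rr)))
        = e23 Rr * (e13 Rr * ((e12 Rr * e12 (τ Rr)) * (e13 (τ Rr) * e23 (τ Rr)))) by simp only [mul_assoc],
      (e_cancel e12).2, one_mul, show e13 Rr * (e13 (τ Rr) * e23 (τ Rr)) = (e13 Rr * e13 (τ Rr)) * e23 (τ Rr) by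
        simp only [mul_assoc], (e_cancel e13).2, one_mul, (e_cancel e23).2]
  exact (left_inv_eq_right_inv h1 h2).symm

end Hex

/-! ### D7 / D8 style bridges -/

section Bridges
variable (S : HH ⊗[K] HH)

lemma brMulLeft1 (f : HH →ₗ[K] HH ⊗[K] HH) (x : HH ⊗[K] HH) :
    TensorProduct.map ((LinearMap.mulLeft K S) ∘ₗ f) LinearMap.id x
      = ((S ⊗ₜ (1:HH)) * (TensorProduct.map f LinearMap.id x) : (HH ⊗[K] HH) ⊗[K] HH) := by
  induction x using TensorProduct.induction_on with
  | zero => simp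
  | tmul g h => simp [Algebra.TensorProduct.tmul_mul_tmul]
  | add u v hu hv => simp only [map_add, mul_add, hu, hv]

lemma brMulLeft2 (f : HH →ₗ[K] HH ⊗[K] HH) (x : HH ⊗[K] HH) :
    TensorProduct.map LinearMap.id ((LinearMap.mulLeft K S) ∘ₗ f) x
      = (((1:HH) ⊗ₜ S) * (TensorProduct.map LinearMap.id f x) : HH ⊗[K] (HH ⊗[K] HH)) := by
  induction x using TensorProduct.induction_on with
  | zero => simp
  | tmul g h => simp [Algebra.TensorProduct.tmul_mul_tmul]
  | add u v hu hv => simp only [map_add, mul_add, hu, hv]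

lemma br_sw (f : HH →ₗ[K] HH ⊗[K] HH) (x : HH ⊗[K] HH) :
    TensorProduct.map LinearMap.id
        ((TensorProduct.comm K HH HH : HH ⊗[K] HH →ₗ[K] HH ⊗[K] HH) ∘ₗ f) x
      = qA (TensorProduct.map LinearMap.id f x) := by
  induction x using TensorProduct.induction_on with
  | zero => simp
  | tmul g h => simpa using (qA_tmul' g (f h)).symm
  | add u v hu hv => simp only [map_add, hu, hv]

lemma e23_apply (x : HH ⊗[K] HH) : (e23 x : HH ⊗[K] (HH ⊗[K] HH)) = (1:HH) ⊗ₜ x := rfl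

end Bridges

section DLemmas
variable (Rr : HH ⊗[K] HH)
local notation "τ" => TensorProduct.comm K HH HH
local notation "Δ" => comulL K HH

lemma D7'
    (h5 : (TensorProduct.map LinearMap.id (comulL K HH) Rr)
      = (TensorProduct.map LinearMap.id (TensorProduct.mk K HH HH 1) Rr) *
        ((TensorProduct.assoc K HH HH HH) (Rr ⊗ₜ (1 : HH)))) :
    alA (TensorProduct.map
        ((LinearMap.mulLeft K (τ Rr)) ∘ₗ (TensorProduct.comm K HH HH : HH ⊗[K] HH →ₗ[K] HH ⊗[K] HH) ∘ₗ Δ)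
        LinearMap.id (τ Rr))
      = e12 (τ Rr) * (e13 (τ Rr) * e23 (τ Rr)) := by
  rw [show ((LinearMap.mulLeft K (τ Rr)) ∘ₗ (TensorProduct.comm K HH HH : HH ⊗[K] HH →ₗ[K] HH ⊗[K] HH) ∘ₗ Δ)
      = ((LinearMap.mulLeft K (τ Rr)) ∘ₗ ((TensorProduct.comm K HH HH : HH ⊗[K] HH →ₗ[K] HH ⊗[K] HH) ∘ₗ Δ)) from rfl,
    brMulLeft1, map_mul, brE12, br_pa, D1' Rr h5, map_mul, pA_e23, pA_e13]

lemma D8'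
    (h4 : (TensorProduct.assoc K HH HH HH) (TensorProduct.map (comulL K HH) LinearMap.id Rr)
      = (TensorProduct.map LinearMap.id (TensorProduct.mk K HH HH 1) Rr) * ((1 : HH) ⊗ₜ Rr)) :
    TensorProduct.map LinearMap.id
        ((LinearMap.mulLeft K (τ Rr)) ∘ₗ (TensorProduct.comm K HH HH : HH ⊗[K] HH →ₗ[K] HH ⊗[K] HH) ∘ₗ Δ)
        (τ Rr)
      = e23 (τ Rr) * (e13 (τ Rr) * e12 (τ Rr)) := by
  rw [show ((LinearMap.mulLeft K (τ Rr)) ∘ₗ (TensorProduct.comm K HH HH : HH ⊗[K] HH →ₗ[K] HH ⊗[K] HH) ∘ₗ Δ)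
      = ((LinearMap.mulLeft K (τ Rr)) ∘ₗ ((TensorProduct.comm K HH HH : HH ⊗[K] HH →ₗ[K] HH ⊗[K] HH) ∘ₗ Δ)) from rfl,
    brMulLeft2, br_sw, D2' Rr h4, map_mul, qA_e12, qA_e13, ← e23_apply]

end DLemmas

/-! ### conversion lemmas into Phi form -/

section Conv
variable (ac : HH →ₗ[K] Module.End K AA) (Rr : HH ⊗[K] HH)

lemma conv1 (hone : ac 1 = 1) (u v w : AA) (x : HH ⊗[K] HH) :
    u * (LinearMap.mul' K AA (pairAct K HH ac x (v ⊗ₜ w))) = Phi ac u v w (e23 x) := by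
  induction x using TensorProduct.induction_on with
  | zero => simp
  | tmul p q => simp [pairAct_tmul, Phi_tmul, e23_tmul, hone]
  | add s t hs ht => simp only [map_add, LinearMap.add_apply, mul_add, hs, ht]

lemma conv2 (u v w : AA) (x : HH ⊗[K] HH) (z : HH) :
    (LinearMap.mul' K AA (pairAct K HH ac x (u ⊗ₜ v))) * ac z w
      = Phi ac u v w (alA (x ⊗ₜ z)) := by
  induction x using TensorProduct.induction_on with
  | zero => simp
  | tmul p q => simp [pairAct_tmul, Phi_tmul, alA, mul_assoc]
  | add s t hs ht => simp only [map_add, LinearMap.add_apply, add_mul, add_tmul, hs, ht]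

lemma conv2' (hone : ac 1 = 1) (u v w : AA) (x : HH ⊗[K] HH) :
    (LinearMap.mul' K AA (pairAct K HH ac x (u ⊗ₜ v))) * w = Phi ac u v w (e12 x) := by
  induction x using TensorProduct.induction_on with
  | zero => simp
  | tmul p q => simp [pairAct_tmul, Phi_tmul, e12_tmul, hone, mul_assoc]
  | add s t hs ht => simp only [map_add, LinearMap.add_apply, add_mul, hs, ht]

lemma conv3 (u v w : AA) (z : HH) (x : HH ⊗[K] HH) :
    ac z u * LinearMap.mul' K AA (pairAct K HH ac x (v ⊗ₜ w))
      = Phi ac u v w (z ⊗ₜ x) := by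
  induction x using TensorProduct.induction_on with
  | zero => simp
  | tmul p q => simp [pairAct_tmul, Phi_tmul]
  | add s t hs ht => simp only [map_add, LinearMap.add_apply, mul_add, tmul_add, hs, ht]

lemma conv4 (hmul : ∀ g h : HH, ac (g*h) = ac g * ac h) (u v w : AA) (z z' : HH)
    (x : HH ⊗[K] HH) :
    ac z u * LinearMap.mul' K AA (pairAct K HH ac x (v ⊗ₜ ac z' w))
      = Phi ac u v w ((((1:HH) ⊗ₜ x) * (z ⊗ₜ ((1:HH) ⊗ₜ z'))) : HH ⊗[K] (HH ⊗[K] HH)) := by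
  induction x using TensorProduct.induction_on with
  | zero => simp
  | tmul p q =>
    simp [pairAct_tmul, Phi_tmul, Algebra.TensorProduct.tmul_mul_tmul, hmul,
      Module.End.mul_apply]
  | add s t hs ht =>
    simp only [map_add, LinearMap.add_apply, mul_add, tmul_add, add_mul, hs, ht]

lemma absorb1 (hmul : ∀ g h : HH, ac (g*h) = ac g * ac h) (u v w : AA) (z z' : HH)
    (Y : HH ⊗[K] (HH ⊗[K] HH)) :
    Phi ac (ac z u) v (ac z' w) Y
      = Phi ac u v w (Y * (z ⊗ₜ ((1:HH) ⊗ₜ z'))) := by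
  induction Y using TensorProduct.induction_on with
  | zero => simp
  | tmul p yz =>
    induction yz using TensorProduct.induction_on with
    | zero => simp
    | tmul q r =>
      simp [Phi_tmul, Algebra.TensorProduct.tmul_mul_tmul, hmul, Module.End.mul_apply]
    | add s t hs ht => simp only [tmul_add, add_mul, map_add, hs, ht]
  | add s t hs ht => simp only [add_mul, map_add, hs, ht]

lemma absorb2 (hmul : ∀ g h : HH, ac (g*h) = ac g * ac h) (u v w : AA) (z z' : HH)
    (Y : HH ⊗[K] (HH ⊗[K] HH)) :
    Phi ac u (ac z v) (ac z' w) Y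
      = Phi ac u v w (Y * ((1:HH) ⊗ₜ (z ⊗ₜ z'))) := by
  induction Y using TensorProduct.induction_on with
  | zero => simp
  | tmul p yz =>
    induction yz using TensorProduct.induction_on with
    | zero => simp
    | tmul q r =>
      simp [Phi_tmul, Algebra.TensorProduct.tmul_mul_tmul, hmul, Module.End.mul_apply]
    | add s t hs ht => simp only [tmul_add, add_mul, map_add, hs, ht]
  | add s t hs ht => simp only [add_mul, map_add, hs, ht]

lemma convB (hone : ac 1 = 1) (hmul : ∀ g h : HH, ac (g*h) = ac g * ac h)
    (hma : ∀ (h : HH) (a b : AA),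
      ac h (a * b) = LinearMap.mul' K AA ((pairAct K HH ac) (comulL K HH h) (a ⊗ₜ b)))
    (hcom : ∀ h : HH, Rr * comulL K HH h
      = (TensorProduct.comm K HH HH) (comulL K HH h) * Rr)
    (u v w : AA) (x : HH ⊗[K] HH) :
    LinearMap.mul' K AA (pairAct K HH ac x ((rBracket K HH AA ac Rr (u ⊗ₜ v)) ⊗ₜ w))
      = Phi ac u v w (alA (TensorProduct.map (comulL K HH) LinearMap.id x))
        - Phi ac v u w (alA (TensorProduct.map
            ((LinearMap.mulLeft K ((TensorProduct.comm K HH HH) Rr)) ∘ₗ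
              (TensorProduct.comm K HH HH : HH ⊗[K] HH →ₗ[K] HH ⊗[K] HH) ∘ₗ (comulL K HH))
            LinearMap.id x)) := by
  induction x using TensorProduct.induction_on with
  | zero => simp
  | tmul g h =>
    have e0 : LinearMap.mul' K AA
        (pairAct K HH ac (g ⊗ₜ h) ((rBracket K HH AA ac Rr (u ⊗ₜ v)) ⊗ₜ w))
        = ac g (rBracket K HH AA ac Rr (u ⊗ₜ v)) * ac h w := by
      simp [pairAct_tmul]
    rw [e0, equiv_L ac Rr hone hmul hma hcom, rBracket_apply, comm_pairAct,
      TensorProduct.comm_tmul, ← pairAct_mul_apply ac hmul, sub_mul, conv2, conv2]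
    simp
  | add s t hs ht =>
    simp only [map_add, LinearMap.add_apply]
    rw [hs, ht]; abel

lemma convD (hone : ac 1 = 1) (hmul : ∀ g h : HH, ac (g*h) = ac g * ac h)
    (hma : ∀ (h : HH) (a b : AA),
      ac h (a * b) = LinearMap.mul' K AA ((pairAct K HH ac) (comulL K HH h) (a ⊗ₜ b)))
    (hcom : ∀ h : HH, Rr * comulL K HH h
      = (TensorProduct.comm K HH HH) (comulL K HH h) * Rr)
    (u v w : AA) (x : HH ⊗[K] HH) :
    LinearMap.mul' K AA (pairAct K HH ac x (w ⊗ₜ (rBracket K HH AA ac Rr (u ⊗ₜ v))))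
      = Phi ac w u v (TensorProduct.map LinearMap.id (comulL K HH) x)
        - Phi ac w v u (TensorProduct.map LinearMap.id
            ((LinearMap.mulLeft K ((TensorProduct.comm K HH HH) Rr)) ∘ₗ
              (TensorProduct.comm K HH HH : HH ⊗[K] HH →ₗ[K] HH ⊗[K] HH) ∘ₗ (comulL K HH)) x) := by
  induction x using TensorProduct.induction_on with
  | zero => simp
  | tmul g h =>
    have e0 : LinearMap.mul' K AA
        (pairAct K HH ac (g ⊗ₜ h) (w ⊗ₜ (rBracket K HH AA ac Rr (u ⊗ₜ v))))
        = ac g w * ac h (rBracket K HH AA ac Rr (u ⊗ₜ v)) := by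
      simp [pairAct_tmul]
    rw [e0, equiv_L ac Rr hone hmul hma hcom, rBracket_apply, comm_pairAct,
      TensorProduct.comm_tmul, ← pairAct_mul_apply ac hmul, mul_sub, conv3, conv3]
    simp
  | add s t hs ht =>
    simp only [map_add, LinearMap.add_apply]
    rw [hs, ht]; abel

end Conv

section Main
variable (ac : HH →ₗ[K] Module.End K AA) (Rr : HH ⊗[K] HH)

lemma convC (hone : ac 1 = 1) (hmul : ∀ g h : HH, ac (g*h) = ac g * ac h)
    (hma : ∀ (h : HH) (a b : AA),
      ac h (a * b) = LinearMap.mul' K AA ((pairAct K HH ac) (comulL K HH h) (a ⊗ₜ b)))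
    (hcom : ∀ h : HH, Rr * comulL K HH h
      = (TensorProduct.comm K HH HH) (comulL K HH h) * Rr)
    (a b c : AA) (x : HH ⊗[K] HH) :
    rBracket K HH AA ac Rr
        (TensorProduct.map LinearMap.id
          (((TensorProduct.mk K AA AA).compr₂ (rBracket K HH AA ac Rr)).flip c)
          (pairAct K HH ac x (b ⊗ₜ a)))
      = Phi ac b a c (e12 x)
        - Phi ac b c a (e23 ((TensorProduct.comm K HH HH) Rr) * e13 x)
        - Phi ac a c b
            (alA (TensorProduct.map (comulL K HH) LinearMap.id ((TensorProduct.comm K HH HH) Rr))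
              * e13 ((TensorProduct.comm K HH HH) x))
        + Phi ac c a b
            (alA (TensorProduct.map
                ((LinearMap.mulLeft K ((TensorProduct.comm K HH HH) Rr)) ∘ₗ
                  (TensorProduct.comm K HH HH : HH ⊗[K] HH →ₗ[K] HH ⊗[K] HH) ∘ₗ (comulL K HH))
                LinearMap.id ((TensorProduct.comm K HH HH) Rr))
              * e23 ((TensorProduct.comm K HH HH) x)) := by
  induction x using TensorProduct.induction_on with
  | zero => simp
  | tmul g h =>
    have hfc : ∀ y : AA, (((TensorProduct.mk K AA AA).compr₂ (rBracket K HH AA ac Rr)).flip c) y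
        = rBracket K HH AA ac Rr (y ⊗ₜ c) := fun y => rfl
    have step0 : TensorProduct.map LinearMap.id
        (((TensorProduct.mk K AA AA).compr₂ (rBracket K HH AA ac Rr)).flip c)
        (pairAct K HH ac (g ⊗ₜ h) (b ⊗ₜ a))
        = (ac g b) ⊗ₜ (rBracket K HH AA ac Rr ((ac h a) ⊗ₜ c)) := by
      simp [pairAct_tmul, hfc]
    rw [step0, rBracket_apply ac Rr ((ac g b) ⊗ₜ _), TensorProduct.comm_tmul,
      LinearMap.mul'_apply, convB ac Rr hone hmul hma hcom,
      absorb1 ac hmul, absorb2 ac hmul,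
      rBracket_apply ac Rr ((ac h a) ⊗ₜ c), TensorProduct.comm_tmul, mul_sub,
      LinearMap.mul'_apply, conv4 ac hmul]
    have p1 : ac g b * (ac h a * c) = Phi ac b a c (e12 (g ⊗ₜ h)) := by
      simp [e12_tmul, Phi_tmul, hone]
    rw [p1]
    simp only [TensorProduct.comm_tmul, e13_tmul, e23_apply,
      Algebra.TensorProduct.tmul_mul_tmul, one_mul, mul_one]
    abel
  | add s t hs ht =>
    simp only [map_add, LinearMap.add_apply, hs, ht, mul_add]
    abel


lemma JLHS (hone : ac 1 = 1) (hmul : ∀ g h : HH, ac (g*h) = ac g * ac h)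
    (hma : ∀ (h : HH) (a b : AA),
      ac h (a * b) = LinearMap.mul' K AA ((pairAct K HH ac) (comulL K HH h) (a ⊗ₜ b)))
    (hcom : ∀ h : HH, Rr * comulL K HH h = (TensorProduct.comm K HH HH) (comulL K HH h) * Rr)
    (h5 : (TensorProduct.map LinearMap.id (comulL K HH) Rr)
      = (TensorProduct.map LinearMap.id (TensorProduct.mk K HH HH 1) Rr) *
        ((TensorProduct.assoc K HH HH HH) (Rr ⊗ₜ (1 : HH))))
    (a b c : AA) :
    rBracket K HH AA ac Rr (a ⊗ₜ rBracket K HH AA ac Rr (b ⊗ₜ c))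
      = Phi ac a b c 1
        - Phi ac a c b (e23 ((TensorProduct.comm K HH HH) Rr))
        - Phi ac b c a (e23 ((TensorProduct.comm K HH HH) Rr) * e13 ((TensorProduct.comm K HH HH) Rr))
        + Phi ac c b a (e12 ((TensorProduct.comm K HH HH) Rr) *
            (e13 ((TensorProduct.comm K HH HH) Rr) * e23 ((TensorProduct.comm K HH HH) Rr))) := by
  rw [rBracket_apply ac Rr (a ⊗ₜ _), TensorProduct.comm_tmul, LinearMap.mul'_apply,
    convB ac Rr hone hmul hma hcom b c a, D1' Rr h5, D7' Rr h5,
    rBracket_apply ac Rr (b ⊗ₜ c), TensorProduct.comm_tmul, mul_sub, LinearMap.mul'_apply,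
    conv1 ac hone a c b, ← Phi_one ac hone a b c]
  abel

lemma JRHS1 (hone : ac 1 = 1) (hmul : ∀ g h : HH, ac (g*h) = ac g * ac h)
    (hma : ∀ (h : HH) (a b : AA),
      ac h (a * b) = LinearMap.mul' K AA ((pairAct K HH ac) (comulL K HH h) (a ⊗ₜ b)))
    (hcom : ∀ h : HH, Rr * comulL K HH h = (TensorProduct.comm K HH HH) (comulL K HH h) * Rr)
    (h4 : (TensorProduct.assoc K HH HH HH) (TensorProduct.map (comulL K HH) LinearMap.id Rr)
      = (TensorProduct.map LinearMap.id (TensorProduct.mk K HH HH 1) Rr) * ((1 : HH) ⊗ₜ Rr))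
    (a b c : AA) :
    rBracket K HH AA ac Rr (rBracket K HH AA ac Rr (a ⊗ₜ b) ⊗ₜ c)
      = Phi ac a b c 1
        - Phi ac b a c (e12 ((TensorProduct.comm K HH HH) Rr))
        - Phi ac c a b (e12 ((TensorProduct.comm K HH HH) Rr) * e13 ((TensorProduct.comm K HH HH) Rr))
        + Phi ac c b a (e23 ((TensorProduct.comm K HH HH) Rr) *
            (e13 ((TensorProduct.comm K HH HH) Rr) * e12 ((TensorProduct.comm K HH HH) Rr))) := by
  rw [rBracket_apply ac Rr (_ ⊗ₜ c), TensorProduct.comm_tmul, LinearMap.mul'_apply,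
    convD ac Rr hone hmul hma hcom a b c, D2' Rr h4, D8' Rr h4,
    rBracket_apply ac Rr (a ⊗ₜ b), TensorProduct.comm_tmul, sub_mul, LinearMap.mul'_apply,
    conv2' ac hone b a c, mul_assoc, ← Phi_one ac hone a b c]
  abel

lemma JRHS2 (hone : ac 1 = 1) (hmul : ∀ g h : HH, ac (g*h) = ac g * ac h)
    (hma : ∀ (h : HH) (a b : AA),
      ac h (a * b) = LinearMap.mul' K AA ((pairAct K HH ac) (comulL K HH h) (a ⊗ₜ b)))
    (hcom : ∀ h : HH, Rr * comulL K HH h = (TensorProduct.comm K HH HH) (comulL K HH h) * Rr)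
    (h5 : (TensorProduct.map LinearMap.id (comulL K HH) Rr)
      = (TensorProduct.map LinearMap.id (TensorProduct.mk K HH HH 1) Rr) *
        ((TensorProduct.assoc K HH HH HH) (Rr ⊗ₜ (1 : HH))))
    (hsym : ((TensorProduct.comm K HH HH) Rr) * Rr = 1)
    (a b c : AA) :
    rBracket K HH AA ac Rr
        (TensorProduct.map LinearMap.id
          (((TensorProduct.mk K AA AA).compr₂ (rBracket K HH AA ac Rr)).flip c)
          (pairAct K HH ac ((TensorProduct.comm K HH HH) Rr) (b ⊗ₜ a)))
      = Phi ac b a c (e12 ((TensorProduct.comm K HH HH) Rr))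
        - Phi ac b c a (e23 ((TensorProduct.comm K HH HH) Rr) * e13 ((TensorProduct.comm K HH HH) Rr))
        - Phi ac a c b (e23 ((TensorProduct.comm K HH HH) Rr))
        + Phi ac c a b (e12 ((TensorProduct.comm K HH HH) Rr) * e13 ((TensorProduct.comm K HH HH) Rr)) := by
  rw [convC ac Rr hone hmul hma hcom a b c, D1' Rr h5, D7' Rr h5, tcomm_tcomm]
  have h1 : (e23 ((TensorProduct.comm K HH HH) Rr) * e13 ((TensorProduct.comm K HH HH) Rr)) * e13 Rr
      = e23 ((TensorProduct.comm K HH HH) Rr) := by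
    rw [mul_assoc, ← map_mul, hsym, map_one, mul_one]
  have h2 : (e12 ((TensorProduct.comm K HH HH) Rr) *
        (e13 ((TensorProduct.comm K HH HH) Rr) * e23 ((TensorProduct.comm K HH HH) Rr))) * e23 Rr
      = e12 ((TensorProduct.comm K HH HH) Rr) * e13 ((TensorProduct.comm K HH HH) Rr) := by
    rw [mul_assoc, mul_assoc, ← map_mul, hsym, map_one, mul_one]
  rw [h1, h2]

lemma Jacobi (hone : ac 1 = 1) (hmul : ∀ g h : HH, ac (g*h) = ac g * ac h)
    (hma : ∀ (h : HH) (a b : AA),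
      ac h (a * b) = LinearMap.mul' K AA ((pairAct K HH ac) (comulL K HH h) (a ⊗ₜ b)))
    (hcom : ∀ h : HH, Rr * comulL K HH h = (TensorProduct.comm K HH HH) (comulL K HH h) * Rr)
    (h4 : (TensorProduct.assoc K HH HH HH) (TensorProduct.map (comulL K HH) LinearMap.id Rr)
      = (TensorProduct.map LinearMap.id (TensorProduct.mk K HH HH 1) Rr) * ((1 : HH) ⊗ₜ Rr))
    (h5 : (TensorProduct.map LinearMap.id (comulL K HH) Rr)
      = (TensorProduct.map LinearMap.id (TensorProduct.mk K HH HH 1) Rr) *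
        ((TensorProduct.assoc K HH HH HH) (Rr ⊗ₜ (1 : HH))))
    (hsym : ((TensorProduct.comm K HH HH) Rr) * Rr = 1)
    (a b c : AA) :
    rBracket K HH AA ac Rr (a ⊗ₜ rBracket K HH AA ac Rr (b ⊗ₜ c))
      = rBracket K HH AA ac Rr (rBracket K HH AA ac Rr (a ⊗ₜ b) ⊗ₜ c) +
          rBracket K HH AA ac Rr
            ((TensorProduct.map LinearMap.id
                (((TensorProduct.mk K AA AA).compr₂ (rBracket K HH AA ac Rr)).flip c))
              ((pairAct K HH ac) ((TensorProduct.comm K HH HH) Rr) (b ⊗ₜ a))) := by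
  rw [JLHS ac Rr hone hmul hma hcom h5 a b c,
    JRHS1 ac Rr hone hmul hma hcom h4 a b c,
    JRHS2 ac Rr hone hmul hma hcom h5 hsym a b c,
    show Phi ac c b a (e12 ((TensorProduct.comm K HH HH) Rr) *
          (e13 ((TensorProduct.comm K HH HH) Rr) * e23 ((TensorProduct.comm K HH HH) Rr)))
        = Phi ac c b a (e23 ((TensorProduct.comm K HH HH) Rr) *
          (e13 ((TensorProduct.comm K HH HH) Rr) * e12 ((TensorProduct.comm K HH HH) Rr)))
      from congrArg _ (YBE_A Rr hcom hsym h4)]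
  abel

end Main

end RAux

/-- For a triangular Hopf algebra `H` and an `H`-module algebra `A`,
the `R`-commutator is `H`-equivariant, satisfies the braided Jacobi identity and the
braided antisymmetry. -/
theorem rCommutator_is_HLie
    (Rinv : H ⊗[k] H) (hR : IsTriangular k H R Rinv)
    (hact : IsModAlg k H A act) :
    (∀ (h : H) (a b : A),
      act h (rBracket k H A act R (a ⊗ₜ b))
        = rBracket k H A act R ((pairAct k H act) (comulL k H h) (a ⊗ₜ b))) ∧
    (∀ a b c : A,
      rBracket k H A act R (a ⊗ₜ rBracket k H A act R (b ⊗ₜ c))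
        = rBracket k H A act R (rBracket k H A act R (a ⊗ₜ b) ⊗ₜ c) +
          rBracket k H A act R
            ((TensorProduct.map LinearMap.id
                (((TensorProduct.mk k A A).compr₂ (rBracket k H A act R)).flip c))
              ((pairAct k H act) ((TensorProduct.comm k H H) R) (b ⊗ₜ a)))) ∧
    (∀ a b : A,
      rBracket k H A act R ((pairAct k H act) ((TensorProduct.comm k H H) R) (a ⊗ₜ b))
        = - rBracket k H A act R (b ⊗ₜ a)) := by
  obtain ⟨hRinv, hRinv2, hcom, h4, h5, hsym⟩ := hR
  obtain ⟨hone, hmul, hma, hcu⟩ := hact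
  refine ⟨fun h a b => equiv_L act R hone hmul hma hcom h (a ⊗ₜ b),
    fun a b c => Jacobi act R hone hmul hma hcom h4 h5 hsym a b c,
    fun a b => ?_⟩
  have h3 := antisym_L act R hone hmul hsym (a ⊗ₜ b)
  simpa using h3

end RCommutator

end
end

section
/- Let H be a triangular Hopf algebra with R-matrix R, F a twisting cocycle, and g an H-Lie algebra with bracket [·,·]. Define the twisted bracket [ξ,η]' := Σ [F₁•ξ, F₂•η] and R̃ := F₂₁⁻¹·R·F = Σ R̃₁⊗R̃₂. Then [·,·]' satisfies the braided Jacobi identity with respect to R̃, namely [ξ,[η,ζ]']' = [[ξ,η]',ζ]' + Σ [R̃₂•η,[R̃₁•ξ,ζ]']', and the braided antisymmetry Σ [R̃₂•ξ, R̃₁•η]' = −[η,ξ]', for all ξ,η,ζ ∈ g. -/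
open TensorProduct

noncomputable section

variable (k : Type*) [Field k] (H : Type*) [Ring H] [HopfAlgebra k H]

variable (A : Type*) [Ring A] [Algebra k A]

section AuxiliaryLemmas

set_option synthInstance.maxHeartbeats 160000
set_option maxHeartbeats 800000

variable {k H}
variable {gm : Type*} [AddCommMonoid gm] [Module k gm]

private lemma aux_ext3 {M N P X : Type*} [AddCommMonoid M] [AddCommMonoid N] [AddCommMonoid P]
    [AddCommMonoid X] [Module k M] [Module k N] [Module k P] [Module k X]
    {f f' : M ⊗[k] (N ⊗[k] P) →ₗ[k] X}
    (h : ∀ (a : M) (b : N) (c : P), f (a ⊗ₜ (b ⊗ₜ c)) = f' (a ⊗ₜ (b ⊗ₜ c))) : f = f' := by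
  apply TensorProduct.ext'
  intro a w
  induction w using TensorProduct.induction_on with
  | zero => simp
  | tmul b c => exact h a b c
  | add u v hu hv => rw [TensorProduct.tmul_add, map_add, map_add, hu, hv]

private noncomputable def PA (A1 : H →ₐ[k] Module.End k gm) :
    H ⊗[k] H →ₐ[k] Module.End k (gm ⊗[k] gm) :=
  (Module.endTensorEndAlgHom (R := k) (S := k) (A := k) (M := gm) (N := gm)).comp
    (Algebra.TensorProduct.map A1 A1)

private lemma PA_tmul (A1 : H →ₐ[k] Module.End k gm) (x y : H) :
    PA A1 (x ⊗ₜ y) = TensorProduct.map (A1 x) (A1 y) := by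
  apply TensorProduct.ext'
  intro a b
  simp [PA, Module.endTensorEndAlgHom_apply]

private noncomputable def QA (A1 : H →ₐ[k] Module.End k gm) :
    H ⊗[k] (H ⊗[k] H) →ₐ[k] Module.End k (gm ⊗[k] (gm ⊗[k] gm)) :=
  (Module.endTensorEndAlgHom (R := k) (S := k) (A := k) (M := gm) (N := gm ⊗[k] gm)).comp
    (Algebra.TensorProduct.map A1 (PA A1))

private lemma QA_tmul (A1 : H →ₐ[k] Module.End k gm) (x : H) (W : H ⊗[k] H) :
    QA A1 (x ⊗ₜ W) = TensorProduct.map (A1 x) (PA A1 W) := by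
  apply aux_ext3
  intro a b c
  simp [QA, Module.endTensorEndAlgHom_apply]

private noncomputable def Q'A (A1 : H →ₐ[k] Module.End k gm) :
    (H ⊗[k] H) ⊗[k] H →ₐ[k] Module.End k ((gm ⊗[k] gm) ⊗[k] gm) :=
  (Module.endTensorEndAlgHom (R := k) (S := k) (A := k) (M := gm ⊗[k] gm) (N := gm)).comp
    (Algebra.TensorProduct.map (PA A1) A1)

private lemma Q'A_tmul (A1 : H →ₐ[k] Module.End k gm) (W : H ⊗[k] H) (z : H) :
    Q'A A1 (W ⊗ₜ z) = TensorProduct.map (PA A1 W) (A1 z) := by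
  apply TensorProduct.ext'
  intro u c
  simp [Q'A, Module.endTensorEndAlgHom_apply]

private lemma comm_eq' (X : H ⊗[k] H) :
    (TensorProduct.comm k H H) X = (Algebra.TensorProduct.comm k H H) X := by
  induction X using TensorProduct.induction_on with
  | zero => simp
  | tmul a b => simp
  | add u v hu hv => rw [map_add, map_add, hu, hv]

private lemma comm_mul' (X Y : H ⊗[k] H) :
    (TensorProduct.comm k H H) (X * Y)
      = (TensorProduct.comm k H H) X * (TensorProduct.comm k H H) Y := by
  rw [comm_eq', comm_eq', comm_eq', map_mul]

private lemma comm_comm' (X : H ⊗[k] H) :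
    (TensorProduct.comm k H H) ((TensorProduct.comm k H H) X) = X := by
  induction X using TensorProduct.induction_on with
  | zero => simp
  | tmul a b => simp
  | add u v hu hv => rw [map_add, map_add, hu, hv]

private lemma assoc_eq' (Z : (H ⊗[k] H) ⊗[k] H) :
    (TensorProduct.assoc k H H H) Z = (Algebra.TensorProduct.assoc k k k H H H) Z := by
  induction Z using TensorProduct.induction_on with
  | zero => simp
  | tmul W z =>
      induction W using TensorProduct.induction_on with
      | zero => rw [TensorProduct.zero_tmul]; simp
      | tmul x y => simp
      | add u v hu hv => rw [TensorProduct.add_tmul, map_add, map_add, hu, hv]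
  | add u v hu hv => rw [map_add, map_add, hu, hv]

private noncomputable def iotaA : H ⊗[k] H →ₐ[k] H ⊗[k] (H ⊗[k] H) :=
  (Algebra.TensorProduct.assoc k k k H H H).toAlgHom.comp
    (Algebra.TensorProduct.includeLeft (S := k))

private lemma iotaA_apply (X : H ⊗[k] H) :
    iotaA X = Algebra.TensorProduct.assoc k k k H H H (X ⊗ₜ (1 : H)) := by
  simp [iotaA]

private lemma iotaA_tmul (x y : H) :
    iotaA (x ⊗ₜ y : H ⊗[k] H) = x ⊗ₜ (y ⊗ₜ (1 : H)) := by
  rw [iotaA_apply]; simp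

private noncomputable def sigma12A : H ⊗[k] (H ⊗[k] H) →ₐ[k] H ⊗[k] (H ⊗[k] H) :=
  ((Algebra.TensorProduct.assoc k k k H H H).toAlgHom.comp
    (Algebra.TensorProduct.map (Algebra.TensorProduct.comm k H H).toAlgHom (AlgHom.id k H))).comp
    (Algebra.TensorProduct.assoc k k k H H H).symm.toAlgHom

private lemma sigma12A_assoc (Z : (H ⊗[k] H) ⊗[k] H) :
    sigma12A (Algebra.TensorProduct.assoc k k k H H H Z)
      = Algebra.TensorProduct.assoc k k k H H H
          ((Algebra.TensorProduct.map (Algebra.TensorProduct.comm k H H).toAlgHom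
            (AlgHom.id k H)) Z) := by
  simp [sigma12A]

private lemma sigma12A_tmul (x y z : H) :
    sigma12A (x ⊗ₜ (y ⊗ₜ z) : H ⊗[k] (H ⊗[k] H)) = y ⊗ₜ (x ⊗ₜ z) := by
  have h : (x ⊗ₜ (y ⊗ₜ z) : H ⊗[k] (H ⊗[k] H))
      = Algebra.TensorProduct.assoc k k k H H H ((x ⊗ₜ y) ⊗ₜ z) := by simp
  rw [h, sigma12A_assoc]
  simp

private noncomputable def sg : gm ⊗[k] (gm ⊗[k] gm) →ₗ[k] gm ⊗[k] (gm ⊗[k] gm) :=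
  ((TensorProduct.assoc k gm gm gm).toLinearMap.comp
    (TensorProduct.map (TensorProduct.comm k gm gm).toLinearMap LinearMap.id)).comp
    (TensorProduct.assoc k gm gm gm).symm.toLinearMap

private lemma sg_tmul (a b c : gm) :
    sg (a ⊗ₜ[k] (b ⊗ₜ[k] c)) = b ⊗ₜ[k] (a ⊗ₜ[k] c) := by
  simp [sg]

private lemma M1 (A1 : H →ₐ[k] Module.End k gm) (br : gm ⊗[k] gm →ₗ[k] gm)
    (Δ : H →ₗ[k] H ⊗[k] H)
    (heq : ∀ h : H, (A1 h) ∘ₗ br = br ∘ₗ (PA A1 (Δ h))) (X : H ⊗[k] H) :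
    (PA A1 X) ∘ₗ (TensorProduct.map LinearMap.id br)
      = (TensorProduct.map LinearMap.id br) ∘ₗ
        (QA A1 (TensorProduct.map LinearMap.id Δ X)) := by
  induction X using TensorProduct.induction_on with
  | zero => simp
  | tmul x y =>
      rw [TensorProduct.map_tmul, PA_tmul, QA_tmul]
      apply aux_ext3
      intro a b c
      have hy := LinearMap.congr_fun (heq y) (b ⊗ₜ c)
      simp only [LinearMap.comp_apply, TensorProduct.map_tmul, LinearMap.id_apply] at hy ⊢
      rw [hy]
  | add u v hu hv =>
      simp only [map_add, LinearMap.add_comp, LinearMap.comp_add, hu, hv]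

private lemma M2 (A1 : H →ₐ[k] Module.End k gm) (br : gm ⊗[k] gm →ₗ[k] gm)
    (Δ : H →ₗ[k] H ⊗[k] H)
    (heq : ∀ h : H, (A1 h) ∘ₗ br = br ∘ₗ (PA A1 (Δ h))) (X : H ⊗[k] H) :
    (PA A1 X) ∘ₗ (TensorProduct.map br LinearMap.id)
      = (TensorProduct.map br LinearMap.id) ∘ₗ
        (Q'A A1 (TensorProduct.map Δ LinearMap.id X)) := by
  induction X using TensorProduct.induction_on with
  | zero => simp
  | tmul x y =>
      rw [TensorProduct.map_tmul, PA_tmul, Q'A_tmul]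
      apply TensorProduct.ext'
      intro u c
      have hx := LinearMap.congr_fun (heq x) u
      simp only [LinearMap.comp_apply, TensorProduct.map_tmul, LinearMap.id_apply] at hx ⊢
      rw [hx]
  | add u v hu hv =>
      simp only [map_add, LinearMap.add_comp, LinearMap.comp_add, hu, hv]

private lemma M3 (A1 : H →ₐ[k] Module.End k gm) (Z : (H ⊗[k] H) ⊗[k] H) :
    (QA A1 ((TensorProduct.assoc k H H H) Z)) ∘ₗ (TensorProduct.assoc k gm gm gm).toLinearMap
      = (TensorProduct.assoc k gm gm gm).toLinearMap ∘ₗ (Q'A A1 Z) := by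
  induction Z using TensorProduct.induction_on with
  | zero => simp
  | tmul W z =>
      induction W using TensorProduct.induction_on with
      | zero =>
          rw [TensorProduct.zero_tmul]
          simp
      | tmul x y =>
          rw [TensorProduct.assoc_tmul, QA_tmul, PA_tmul, Q'A_tmul, PA_tmul]
          apply TensorProduct.ext_threefold
          intro a b c
          simp
      | add u v hu hv =>
          simp only [TensorProduct.add_tmul, map_add, LinearMap.add_comp,
            LinearMap.comp_add, hu, hv]
  | add u v hu hv =>
      simp only [map_add, LinearMap.add_comp, LinearMap.comp_add, hu, hv]

private lemma M4 (A1 : H →ₐ[k] Module.End k gm) (c0 : gm) (X : H ⊗[k] H) :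
    (TensorProduct.map LinearMap.id ((TensorProduct.mk k gm gm).flip c0)) ∘ₗ (PA A1 X)
      = (QA A1 (iotaA X)) ∘ₗ
        (TensorProduct.map LinearMap.id ((TensorProduct.mk k gm gm).flip c0)) := by
  induction X using TensorProduct.induction_on with
  | zero => simp
  | tmul x y =>
      rw [iotaA_tmul, PA_tmul, QA_tmul, PA_tmul]
      apply TensorProduct.ext'
      intro a b
      simp
  | add u v hu hv =>
      simp only [map_add, LinearMap.add_comp, LinearMap.comp_add, hu, hv]

private lemma M5 (A1 : H →ₐ[k] Module.End k gm) (Z : H ⊗[k] (H ⊗[k] H)) :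
    sg ∘ₗ (QA A1 Z) = (QA A1 (sigma12A Z)) ∘ₗ sg := by
  induction Z using TensorProduct.induction_on with
  | zero => simp
  | tmul x W =>
      induction W using TensorProduct.induction_on with
      | zero =>
          rw [TensorProduct.tmul_zero]
          simp
      | tmul y z =>
          rw [sigma12A_tmul, QA_tmul, PA_tmul, QA_tmul, PA_tmul]
          apply aux_ext3
          intro a b c
          simp only [LinearMap.comp_apply, TensorProduct.map_tmul, sg_tmul]
      | add u v hu hv =>
          simp only [TensorProduct.tmul_add, map_add, LinearMap.add_comp,
            LinearMap.comp_add, hu, hv]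
  | add u v hu hv =>
      simp only [map_add, LinearMap.add_comp, LinearMap.comp_add, hu, hv]

private lemma M6 (A1 : H →ₐ[k] Module.End k gm) (X : H ⊗[k] H) :
    (TensorProduct.comm k gm gm).toLinearMap ∘ₗ (PA A1 X)
      = (PA A1 ((TensorProduct.comm k H H) X)) ∘ₗ (TensorProduct.comm k gm gm).toLinearMap := by
  induction X using TensorProduct.induction_on with
  | zero => simp
  | tmul x y =>
      rw [TensorProduct.comm_tmul, PA_tmul, PA_tmul]
      apply TensorProduct.ext'
      intro a b
      simp
  | add u v hu hv =>
      simp only [map_add, LinearMap.add_comp, LinearMap.comp_add, hu, hv]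

private lemma BRgen (c : gm ⊗[k] gm →ₗ[k] gm) (c0 : gm) :
    c ∘ₗ TensorProduct.map LinearMap.id (((TensorProduct.mk k gm gm).compr₂ c).flip c0)
      = (c ∘ₗ TensorProduct.map LinearMap.id c) ∘ₗ
        TensorProduct.map LinearMap.id ((TensorProduct.mk k gm gm).flip c0) := by
  apply TensorProduct.ext'
  intro a b
  simp

end AuxiliaryLemmas


set_option maxHeartbeats 3000000 in
set_option synthInstance.maxHeartbeats 200000 in
/-- If `g` is an `H`-Lie algebra for a triangular Hopf algebra `(H, R)` and
`F` is a twisting cocycle, then the twisted bracket `[ξ,η]' = Σ [F₁•ξ, F₂•η]` satisfies the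
braided Jacobi identity and the braided antisymmetry with respect to `R̃ = F₂₁⁻¹ R F`. -/
theorem twisted_bracket_is_HLie
    (R Rinv : H ⊗[k] H) (hR : IsTriangular k H R Rinv)
    (F Finv : H ⊗[k] H) (hF : IsCocycle k H F Finv)
    (g : Type*) [AddCommGroup g] [Module k g]
    (act : H →ₗ[k] Module.End k g)
    (hact1 : act 1 = 1) (hactmul : ∀ x y : H, act (x * y) = act x * act y)
    (br : g ⊗[k] g →ₗ[k] g)
    -- `H`-equivariance of the bracket
    (hequiv : ∀ (h : H) (ξ η : g),
      act h (br (ξ ⊗ₜ η)) = br ((pairAct k H act) (comulL k H h) (ξ ⊗ₜ η)))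
    -- braided Jacobi identity
    (hjac : ∀ ξ η ζ : g,
      br (ξ ⊗ₜ br (η ⊗ₜ ζ))
        = br (br (ξ ⊗ₜ η) ⊗ₜ ζ) +
          br ((TensorProduct.map LinearMap.id
                (((TensorProduct.mk k g g).compr₂ br).flip ζ))
            ((pairAct k H act) ((TensorProduct.comm k H H) R) (η ⊗ₜ ξ))))
    -- braided antisymmetry
    (hanti : ∀ ξ η : g,
      br ((pairAct k H act) ((TensorProduct.comm k H H) R) (ξ ⊗ₜ η)) = - br (η ⊗ₜ ξ)) :
    (∀ ξ η ζ : g,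
      (br ∘ₗ (pairAct k H act) F) (ξ ⊗ₜ (br ∘ₗ (pairAct k H act) F) (η ⊗ₜ ζ))
        = (br ∘ₗ (pairAct k H act) F) ((br ∘ₗ (pairAct k H act) F) (ξ ⊗ₜ η) ⊗ₜ ζ) +
          (br ∘ₗ (pairAct k H act) F)
            ((TensorProduct.map LinearMap.id
                (((TensorProduct.mk k g g).compr₂ (br ∘ₗ (pairAct k H act) F)).flip ζ))
              ((pairAct k H act)
                ((TensorProduct.comm k H H) (((TensorProduct.comm k H H) Finv) * R * F))
                (η ⊗ₜ ξ)))) ∧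
    (∀ ξ η : g,
      (br ∘ₗ (pairAct k H act) F)
          ((pairAct k H act)
            ((TensorProduct.comm k H H) (((TensorProduct.comm k H H) Finv) * R * F))
            (ξ ⊗ₜ η))
        = - (br ∘ₗ (pairAct k H act) F) (η ⊗ₜ ξ)) := by
  classical
  set A1 : H →ₐ[k] Module.End k g := AlgHom.ofLinearMap act hact1 hactmul with hA1def
  have hPapp : ∀ X : H ⊗[k] H, (pairAct k H act) X = PA A1 X := by
    intro X
    induction X using TensorProduct.induction_on with
    | zero => simp
    | tmul x y =>
        rw [PA_tmul]
        simp only [pairAct, LinearMap.comp_apply, TensorProduct.map_tmul,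
          TensorProduct.homTensorHomMap_apply]
        rfl
    | add u v hu hv => rw [map_add, map_add, hu, hv]
  have heq : ∀ h : H, (A1 h) ∘ₗ br = br ∘ₗ (PA A1 (comulL k H h)) := by
    intro h
    apply TensorProduct.ext'
    intro a b
    have hh := hequiv h a b
    rw [hPapp] at hh
    simp only [LinearMap.comp_apply]
    exact hh
  set Rt : H ⊗[k] H :=
    (TensorProduct.comm k H H) (((TensorProduct.comm k H H) Finv) * R * F) with hRtdef
  set F3 : H ⊗[k] (H ⊗[k] H) :=
    (TensorProduct.map LinearMap.id (comulL k H) F) * ((1:H) ⊗ₜ F) with hF3def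
  set Gg : (H ⊗[k] H) ⊗[k] H :=
    (TensorProduct.map (comulL k H) LinearMap.id F) * (F ⊗ₜ (1:H)) with hGgdef
  -- Hopf-algebra-level facts
  have hcommR : ∀ h : H,
      comulL k H h * (TensorProduct.comm k H H) R
        = (TensorProduct.comm k H H) R * (TensorProduct.comm k H H) (comulL k H h) := by
    intro h
    have h1 := congrArg (TensorProduct.comm k H H) (hR.2.2.1 h)
    simp only [comm_mul', comm_comm'] at h1
    exact h1.symm
  have E2' : ∀ X : H ⊗[k] H,
      (TensorProduct.map (comulL k H) LinearMap.id X) *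
          (((TensorProduct.comm k H H) R) ⊗ₜ (1:H))
        = ((((TensorProduct.comm k H H) R) ⊗ₜ (1:H)) :
            (H ⊗[k] H) ⊗[k] H) *
          (TensorProduct.map ((TensorProduct.comm k H H).toLinearMap ∘ₗ comulL k H)
            LinearMap.id X) := by
    intro X
    induction X using TensorProduct.induction_on with
    | zero => simp
    | tmul h a =>
        simp only [TensorProduct.map_tmul, LinearMap.id_apply, LinearMap.comp_apply,
          LinearEquiv.coe_coe, Algebra.TensorProduct.tmul_mul_tmul, mul_one, one_mul]
        rw [hcommR h]
    | add u v hu hv =>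
        rw [map_add, map_add, add_mul, mul_add, hu, hv]
  have hmσ1 : ∀ X : H ⊗[k] H,
      (Algebra.TensorProduct.map (Algebra.TensorProduct.comm k H H).toAlgHom (AlgHom.id k H))
          (TensorProduct.map (comulL k H) LinearMap.id X)
        = TensorProduct.map ((TensorProduct.comm k H H).toLinearMap ∘ₗ comulL k H)
            LinearMap.id X := by
    intro X
    induction X using TensorProduct.induction_on with
    | zero => simp
    | tmul h a =>
        simp only [TensorProduct.map_tmul, LinearMap.id_apply,
          Algebra.TensorProduct.map_tmul, AlgHom.coe_id, id_eq, LinearMap.comp_apply,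
          LinearEquiv.coe_coe]
        rw [comm_eq']
        rfl
    | add u v hu hv => simp only [map_add, hu, hv]
  have hGF3 : Algebra.TensorProduct.assoc k k k H H H Gg = F3 := by
    rw [← assoc_eq', hGgdef, hF3def]
    exact hF.2.2.1
  have E3 : F3 * iotaA Rt
      = iotaA ((TensorProduct.comm k H H) R) * sigma12A F3 := by
    have hRtEq : Rt = Finv * ((TensorProduct.comm k H H) R) *
        ((TensorProduct.comm k H H) F) := by
      rw [hRtdef, comm_mul', comm_mul', comm_comm']
    have hmapσGg :
        (Algebra.TensorProduct.map (Algebra.TensorProduct.comm k H H).toAlgHom (AlgHom.id k H)) Gg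
          = (TensorProduct.map ((TensorProduct.comm k H H).toLinearMap ∘ₗ comulL k H)
              LinearMap.id F)
            * ((((TensorProduct.comm k H H) F) ⊗ₜ (1:H)) : (H ⊗[k] H) ⊗[k] H) := by
      rw [hGgdef, map_mul, hmσ1]
      have hone : (Algebra.TensorProduct.map (Algebra.TensorProduct.comm k H H).toAlgHom
          (AlgHom.id k H)) ((F ⊗ₜ (1:H)) : (H ⊗[k] H) ⊗[k] H)
          = ((TensorProduct.comm k H H) F) ⊗ₜ (1:H) := by
        rw [comm_eq']
        simp
      rw [hone]
    rw [← hGF3, iotaA_apply, iotaA_apply, sigma12A_assoc, ← map_mul, ← map_mul]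
    refine congrArg _ ?_
    rw [hmapσGg, hGgdef, hRtEq]
    have h2 : ((F ⊗ₜ (1:H)) * (Finv ⊗ₜ (1:H)) : (H ⊗[k] H) ⊗[k] H) = 1 := by
      rw [Algebra.TensorProduct.tmul_mul_tmul, hF.1, mul_one, ← Algebra.TensorProduct.one_def]
    have h1 : (((Finv * ((TensorProduct.comm k H H) R) * ((TensorProduct.comm k H H) F))
          ⊗ₜ (1:H)) : (H ⊗[k] H) ⊗[k] H)
        = (Finv ⊗ₜ (1:H)) * (((((TensorProduct.comm k H H) R) ⊗ₜ (1:H)) :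
            (H ⊗[k] H) ⊗[k] H) * ((((TensorProduct.comm k H H) F) ⊗ₜ (1:H)))) := by
      simp only [Algebra.TensorProduct.tmul_mul_tmul, mul_one, mul_assoc]
    rw [h1, ← mul_assoc,
      mul_assoc (TensorProduct.map (comulL k H) LinearMap.id F) (F ⊗ₜ (1:H)) (Finv ⊗ₜ (1:H)),
      h2, mul_one, ← mul_assoc, E2' F, mul_assoc]
  -- pointwise helper lemmas
  have PAcompp : ∀ (X Y : H ⊗[k] H) (v : g ⊗[k] g),
      PA A1 X (PA A1 Y v) = PA A1 (X * Y) v := by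
    intro X Y v
    rw [map_mul]
    rfl
  have QAcompp : ∀ (X Y : H ⊗[k] (H ⊗[k] H)) (v : g ⊗[k] (g ⊗[k] g)),
      QA A1 X (QA A1 Y v) = QA A1 (X * Y) v := by
    intro X Y v
    rw [map_mul]
    rfl
  have Q'Acompp : ∀ (X Y : (H ⊗[k] H) ⊗[k] H) (v : (g ⊗[k] g) ⊗[k] g),
      Q'A A1 X (Q'A A1 Y v) = Q'A A1 (X * Y) v := by
    intro X Y v
    rw [map_mul]
    rfl
  have e2 : TensorProduct.map (LinearMap.id : g →ₗ[k] g) (PA A1 F)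
      = QA A1 ((1:H) ⊗ₜ F) := by
    rw [QA_tmul, map_one, Module.End.one_eq_id]
  have e2' : TensorProduct.map (PA A1 F) (LinearMap.id : g →ₗ[k] g)
      = Q'A A1 (F ⊗ₜ (1:H)) := by
    rw [Q'A_tmul, map_one, Module.End.one_eq_id]
  have e3 := M1 A1 br (comulL k H) heq F
  have e3p : ∀ v : g ⊗[k] (g ⊗[k] g),
      PA A1 F (TensorProduct.map LinearMap.id br v)
        = TensorProduct.map LinearMap.id br
            (QA A1 (TensorProduct.map LinearMap.id (comulL k H) F) v) := by
    intro v
    have h0 := LinearMap.congr_fun e3 v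
    simpa only [LinearMap.comp_apply] using h0
  have C1p : ∀ w : g ⊗[k] (g ⊗[k] g),
      (br ∘ₗ (pairAct k H act) F)
          (TensorProduct.map LinearMap.id (br ∘ₗ (pairAct k H act) F) w)
        = br (TensorProduct.map LinearMap.id br (QA A1 F3 w)) := by
    intro w
    rw [hPapp F]
    have t0 : TensorProduct.map (LinearMap.id : g →ₗ[k] g) (br ∘ₗ PA A1 F)
        = (TensorProduct.map LinearMap.id br) ∘ₗ TensorProduct.map LinearMap.id (PA A1 F) := by
      rw [← TensorProduct.map_comp, LinearMap.id_comp]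
    rw [t0, LinearMap.comp_apply, LinearMap.comp_apply, LinearMap.congr_fun e2 w,
      e3p, QAcompp, ← hF3def]
  have e3' := M2 A1 br (comulL k H) heq F
  have e3'p : ∀ v : (g ⊗[k] g) ⊗[k] g,
      PA A1 F (TensorProduct.map br LinearMap.id v)
        = TensorProduct.map br LinearMap.id
            (Q'A A1 (TensorProduct.map (comulL k H) LinearMap.id F) v) := by
    intro v
    have h0 := LinearMap.congr_fun e3' v
    simpa only [LinearMap.comp_apply] using h0
  have C2p : ∀ u : (g ⊗[k] g) ⊗[k] g,
      (br ∘ₗ (pairAct k H act) F)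
          (TensorProduct.map (br ∘ₗ (pairAct k H act) F) LinearMap.id u)
        = br (TensorProduct.map br LinearMap.id (Q'A A1 Gg u)) := by
    intro u
    rw [hPapp F]
    have t0 : TensorProduct.map (br ∘ₗ PA A1 F) (LinearMap.id : g →ₗ[k] g)
        = (TensorProduct.map br LinearMap.id) ∘ₗ TensorProduct.map (PA A1 F) LinearMap.id := by
      rw [← TensorProduct.map_comp, LinearMap.id_comp]
    rw [t0, LinearMap.comp_apply, LinearMap.comp_apply, LinearMap.congr_fun e2' u,
      e3'p, Q'Acompp, ← hGgdef]
  have M3p : ∀ u : (g ⊗[k] g) ⊗[k] g,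
      QA A1 F3 ((TensorProduct.assoc k g g g) u)
        = (TensorProduct.assoc k g g g) (Q'A A1 Gg u) := by
    intro u
    have h0 := M3 A1 Gg
    have hGgF3 : (TensorProduct.assoc k H H H) Gg = F3 := by
      rw [hGgdef, hF3def]
      exact hF.2.2.1
    rw [hGgF3] at h0
    have h1 := LinearMap.congr_fun h0 u
    simpa only [LinearMap.comp_apply, LinearEquiv.coe_coe] using h1
  have M4p : ∀ (c0 : g) (X : H ⊗[k] H) (v : g ⊗[k] g),
      TensorProduct.map LinearMap.id ((TensorProduct.mk k g g).flip c0) (PA A1 X v)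
        = QA A1 (iotaA X)
            (TensorProduct.map LinearMap.id ((TensorProduct.mk k g g).flip c0) v) := by
    intro c0 X v
    have h0 := LinearMap.congr_fun (M4 A1 c0 X) v
    simpa only [LinearMap.comp_apply] using h0
  have M5p : ∀ (Z : H ⊗[k] (H ⊗[k] H)) (v : g ⊗[k] (g ⊗[k] g)),
      sg (QA A1 Z v) = QA A1 (sigma12A Z) (sg v) := by
    intro Z v
    have h0 := LinearMap.congr_fun (M5 A1 Z) v
    simpa only [LinearMap.comp_apply] using h0
  have BRgenp : ∀ (c : g ⊗[k] g →ₗ[k] g) (c0 : g) (v : g ⊗[k] g),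
      c (TensorProduct.map LinearMap.id (((TensorProduct.mk k g g).compr₂ c).flip c0) v)
        = c (TensorProduct.map LinearMap.id c
            (TensorProduct.map LinearMap.id ((TensorProduct.mk k g g).flip c0) v)) := by
    intro c c0 v
    have h0 := LinearMap.congr_fun (BRgen c c0) v
    simpa only [LinearMap.comp_apply] using h0
  have C3 : (br ∘ₗ TensorProduct.map LinearMap.id br)
      = (br ∘ₗ TensorProduct.map br LinearMap.id) ∘ₗ
          (TensorProduct.assoc k g g g).symm.toLinearMap
        + ((br ∘ₗ TensorProduct.map LinearMap.id br) ∘ₗ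
            QA A1 (iotaA ((TensorProduct.comm k H H) R))) ∘ₗ sg := by
    apply aux_ext3
    intro a b c
    have hj := hjac a b c
    rw [hPapp] at hj
    have hb := BRgenp br c ((PA A1 ((TensorProduct.comm k H H) R)) (b ⊗ₜ a))
    have hm := M4p c ((TensorProduct.comm k H H) R) (b ⊗ₜ a)
    simp only [LinearMap.add_apply, LinearMap.comp_apply, LinearEquiv.coe_coe,
      TensorProduct.map_tmul, LinearMap.id_apply, TensorProduct.assoc_symm_tmul, sg_tmul]
    rw [hj, hb, hm]
    simp only [TensorProduct.map_tmul, LinearMap.id_apply, LinearMap.flip_apply,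
      TensorProduct.mk_apply]
  refine ⟨?_, ?_⟩
  · intro ξ η ζ
    have hw : (ξ ⊗ₜ[k] ((br ∘ₗ (pairAct k H act) F) (η ⊗ₜ[k] ζ)) : g ⊗[k] g)
        = TensorProduct.map LinearMap.id (br ∘ₗ (pairAct k H act) F) (ξ ⊗ₜ[k] (η ⊗ₜ[k] ζ)) := by
      simp
    rw [hw, C1p]
    have hC3 := LinearMap.congr_fun C3 (QA A1 F3 (ξ ⊗ₜ (η ⊗ₜ ζ)))
    simp only [LinearMap.add_apply, LinearMap.comp_apply, LinearEquiv.coe_coe] at hC3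
    rw [hC3]
    congr 1
    · have hx : (ξ ⊗ₜ (η ⊗ₜ ζ) : g ⊗[k] (g ⊗[k] g))
          = (TensorProduct.assoc k g g g) ((ξ ⊗ₜ η) ⊗ₜ ζ) := by simp
      rw [hx, M3p, LinearEquiv.symm_apply_apply, ← C2p]
      simp
    · rw [M5p F3 (ξ ⊗ₜ (η ⊗ₜ ζ)), sg_tmul, QAcompp, ← E3, ← QAcompp, ← C1p, hPapp Rt,
        BRgenp (br ∘ₗ (pairAct k H act) F) ζ (PA A1 Rt (η ⊗ₜ ξ)), M4p ζ Rt (η ⊗ₜ ξ)]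
      have h7 : TensorProduct.map LinearMap.id ((TensorProduct.mk k g g).flip ζ) (η ⊗ₜ ξ)
          = (η ⊗ₜ (ξ ⊗ₜ ζ) : g ⊗[k] (g ⊗[k] g)) := by
        simp
      rw [h7]
  · intro ξ η
    have hantip : ∀ v : g ⊗[k] g,
        br (PA A1 ((TensorProduct.comm k H H) R) v)
          = - br ((TensorProduct.comm k g g) v) := by
      intro v
      induction v using TensorProduct.induction_on with
      | zero => simp
      | tmul a b =>
          have h0 := hanti a b
          rw [hPapp] at h0
          simpa using h0
      | add u w hu hw => simp only [map_add, hu, hw, neg_add]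
    have M6p : ∀ (X : H ⊗[k] H) (v : g ⊗[k] g),
        (TensorProduct.comm k g g) (PA A1 X v)
          = PA A1 ((TensorProduct.comm k H H) X) ((TensorProduct.comm k g g) v) := by
      intro X v
      have h0 := LinearMap.congr_fun (M6 A1 X) v
      simpa only [LinearMap.comp_apply, LinearEquiv.coe_coe] using h0
    have hFRt : F * Rt = ((TensorProduct.comm k H H) R) * ((TensorProduct.comm k H H) F) := by
      rw [hRtdef, comm_mul', comm_mul', comm_comm', ← mul_assoc, ← mul_assoc, hF.1, one_mul]
    simp only [LinearMap.comp_apply, hPapp]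
    rw [PAcompp, hFRt, ← PAcompp, hantip, M6p, comm_comm', TensorProduct.comm_tmul]

end
end

section
/- Let H be a Hopf algebra with an invertible element R = Σ R₁⊗R₂ ∈ H⊗H satisfying R·Δ(h) = Δᵒᵖ(h)·R for all h ∈ H, let S be an associative unital k-algebra and ρ: H → S an algebra homomorphism, with adjoint action ad(h)(a) := Σ ρ(h⁽¹⁾)·a·ρ(γ(h⁽²⁾)) on S. For ξ ∈ S define D(ξ) := ξ⊗1 + Σ ρ(R₂) ⊗ ad(R₁)(ξ) ∈ S⊗S. Then for all h ∈ H and ξ ∈ S: (ρ⊗ρ)(Δ(h))·D(ξ) = Σ D(ad(h⁽¹⁾)(ξ))·(ρ⊗ρ)(Δ(h⁽²⁾)). -/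
open TensorProduct

set_option synthInstance.maxHeartbeats 1000000
set_option maxHeartbeats 2000000

section AuxHopf
open Coalgebra HopfAlgebra
variable {k : Type*} [Field k] {H : Type*} [Ring H] [HopfAlgebra k H]

noncomputable def reprMul {a b : H} {ι κ : Type*} (ra : Coalgebra.Repr k a ι) (rb : Coalgebra.Repr k b κ) :
    Coalgebra.Repr k (a * b) (ι × κ) where
  index := ra.index ×ˢ rb.index
  left p := ra.left p.1 * rb.left p.2
  right p := ra.right p.1 * rb.right p.2
  eq := by
    rw [Bialgebra.comul_mul, ← ra.eq, ← rb.eq, Finset.sum_mul_sum, Finset.sum_product]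
    simp [Algebra.TensorProduct.tmul_mul_tmul]

lemma repr_sum_smul_left {a : H} {ι : Type*} (r : Coalgebra.Repr k a ι) :
    ∑ i ∈ r.index, counit (R := k) (r.right i) • r.left i = a := by
  have h := congrArg (TensorProduct.rid k H) (Coalgebra.sum_tmul_counit_eq r)
  rw [map_sum] at h
  simp only [TensorProduct.rid_tmul] at h
  simpa using h

lemma repr_sum_smul_right {a : H} {ι : Type*} (r : Coalgebra.Repr k a ι) :
    ∑ i ∈ r.index, counit (R := k) (r.left i) • r.right i = a := by
  have h := congrArg (TensorProduct.lid k H) (Coalgebra.sum_counit_tmul_eq r)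
  rw [map_sum] at h
  simp only [TensorProduct.lid_tmul] at h
  simpa using h

lemma sum_mul_antipode_mul {a : H} {ι : Type*} (r : Coalgebra.Repr k a ι) (c : H) :
    ∑ i ∈ r.index, r.left i * (antipode (R := k) (r.right i) * c)
      = counit (R := k) a • c := by
  simp only [← mul_assoc]
  rw [← Finset.sum_mul, sum_mul_antipode_eq_smul, smul_mul_assoc, one_mul]

lemma sum_antipode_mul_mul {a : H} {ι : Type*} (r : Coalgebra.Repr k a ι) (c : H) :
    ∑ i ∈ r.index, antipode (R := k) (r.left i) * (r.right i * c)
      = counit (R := k) a • c := by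
  simp only [← mul_assoc]
  rw [← Finset.sum_mul, sum_antipode_mul_eq_smul, smul_mul_assoc, one_mul]

lemma lTensor_comul_expand_right {a : H} {ι κ : Type*} (ra : Coalgebra.Repr k a ι)
    (ra2 : (i : ι) → Coalgebra.Repr k (ra.right i) κ) :
    (Coalgebra.comul (R := k)).lTensor H (Coalgebra.comul a)
      = ∑ i ∈ ra.index, ∑ p ∈ (ra2 i).index,
          ra.left i ⊗ₜ[k] ((ra2 i).left p ⊗ₜ[k] (ra2 i).right p) := by
  rw [← ra.eq, map_sum]
  refine Finset.sum_congr rfl fun i _ => ?_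
  rw [LinearMap.lTensor_tmul, ← (ra2 i).eq, TensorProduct.tmul_sum]

lemma lTensor_comul_expand_left {a : H} {ι κ : Type*} (ra : Coalgebra.Repr k a ι)
    (la : (i : ι) → Coalgebra.Repr k (ra.left i) κ) :
    (Coalgebra.comul (R := k)).lTensor H (Coalgebra.comul a)
      = ∑ i ∈ ra.index, ∑ p ∈ (la i).index,
          (la i).left p ⊗ₜ[k] ((la i).right p ⊗ₜ[k] ra.right i) := by
  rw [← Coalgebra.coassoc_apply a, ← ra.eq, map_sum, map_sum]
  refine Finset.sum_congr rfl fun i _ => ?_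
  rw [LinearMap.rTensor_tmul, ← (la i).eq, TensorProduct.sum_tmul, map_sum]
  exact Finset.sum_congr rfl fun p _ => by rw [TensorProduct.assoc_tmul]

lemma rTensor_comul_expand_left {a : H} {ι κ : Type*} (ra : Coalgebra.Repr k a ι)
    (la : (i : ι) → Coalgebra.Repr k (ra.left i) κ) :
    (Coalgebra.comul (R := k)).rTensor H (Coalgebra.comul a)
      = ∑ i ∈ ra.index, ∑ p ∈ (la i).index,
          ((la i).left p ⊗ₜ[k] (la i).right p) ⊗ₜ[k] ra.right i := by
  rw [← ra.eq, map_sum]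
  refine Finset.sum_congr rfl fun i _ => ?_
  rw [LinearMap.rTensor_tmul, ← (la i).eq, TensorProduct.sum_tmul]

lemma rTensor_comul_expand_right {a : H} {ι κ : Type*} (ra : Coalgebra.Repr k a ι)
    (ra2 : (i : ι) → Coalgebra.Repr k (ra.right i) κ) :
    (Coalgebra.comul (R := k)).rTensor H (Coalgebra.comul a)
      = ∑ i ∈ ra.index, ∑ p ∈ (ra2 i).index,
          (ra.left i ⊗ₜ[k] (ra2 i).left p) ⊗ₜ[k] (ra2 i).right p := by
  rw [← Coalgebra.coassoc_symm_apply a, lTensor_comul_expand_right ra ra2, map_sum]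
  refine Finset.sum_congr rfl fun i _ => ?_
  rw [map_sum]
  exact Finset.sum_congr rfl fun p _ => by rw [TensorProduct.assoc_symm_tmul]

lemma sum4_comm {M : Type*} [AddCommMonoid M] {ι κ : Type*} {I : ι → Type*} {K : κ → Type*}
    (s : Finset ι) (f : ∀ i, Finset (I i)) (t : Finset κ) (g : ∀ j, Finset (K j))
    (F : (i : ι) → I i → (j : κ) → K j → M) :
    ∑ j ∈ t, ∑ q ∈ g j, ∑ i ∈ s, ∑ p ∈ f i, F i p j q
      = ∑ i ∈ s, ∑ p ∈ f i, ∑ j ∈ t, ∑ q ∈ g j, F i p j q := by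
  rw [Finset.sum_sigma']
  have h1 : ∀ jq : Σ j, K j, (∑ i ∈ s, ∑ p ∈ f i, F i p jq.1 jq.2)
      = ∑ ip ∈ s.sigma f, F ip.1 ip.2 jq.1 jq.2 := fun jq => Finset.sum_sigma' s f _
  rw [Finset.sum_congr rfl fun jq _ => h1 jq, Finset.sum_comm, Finset.sum_sigma]
  refine Finset.sum_congr rfl fun i _ => Finset.sum_congr rfl fun p _ => ?_
  exact Finset.sum_sigma _ _ _

lemma sum_antipode_left_mul {a b : H} {ι κ : Type*} (ra : Coalgebra.Repr k a ι) (rb : Coalgebra.Repr k b κ)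
    (c : H) :
    ∑ i ∈ ra.index, ∑ j ∈ rb.index,
        antipode (R := k) (ra.left i * rb.left j) * (ra.right i * (rb.right j * c))
      = (counit (R := k) a * counit (R := k) b) • c := by
  have h := sum_antipode_mul_mul (reprMul ra rb) c
  simp only [reprMul, mul_assoc] at h
  rw [Finset.sum_product] at h
  rw [h, Bialgebra.counit_mul]

lemma antipode_mul_rev (a b : H) :
    antipode (R := k) (a * b) = antipode (R := k) b * antipode (R := k) a := by
  classical
  obtain ⟨Φ, hΦ⟩ : ∃ Φ : (H ⊗[k] (H ⊗[k] H)) ⊗[k] (H ⊗[k] (H ⊗[k] H)) →ₗ[k] H,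
      ∀ x₁ x₂ x₃ y₁ y₂ y₃ : H,
        Φ ((x₁ ⊗ₜ (x₂ ⊗ₜ x₃)) ⊗ₜ (y₁ ⊗ₜ (y₂ ⊗ₜ y₃)))
          = antipode (R := k) (x₁ * y₁) * (x₂ * (y₂ *
              (antipode (R := k) y₃ * antipode (R := k) x₃))) := by
    refine ⟨LinearMap.mul' k H ∘ₗ (TensorProduct.map
        ((antipode (R := k)) ∘ₗ LinearMap.mul' k H)
        (LinearMap.mul' k H ∘ₗ (TensorProduct.map (LinearMap.mul' k H)
            (LinearMap.mul' k H ∘ₗ (TensorProduct.map (antipode (R := k)) (antipode (R := k)))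
              ∘ₗ (TensorProduct.comm k H H).toLinearMap))
          ∘ₗ (TensorProduct.tensorTensorTensorComm k H H H H).toLinearMap))
      ∘ₗ (TensorProduct.tensorTensorTensorComm k H (H ⊗[k] H) H (H ⊗[k] H)).toLinearMap,
      fun x₁ x₂ x₃ y₁ y₂ y₃ => ?_⟩
    simp [TensorProduct.tensorTensorTensorComm_tmul, LinearMap.mul'_apply, mul_assoc]
  set ra := Coalgebra.Repr.arbitrary k a
  set rb := Coalgebra.Repr.arbitrary k b
  set ra2 : (i : H × H) → Coalgebra.Repr k (ra.right i) (H × H) :=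
    fun i => Coalgebra.Repr.arbitrary k (ra.right i)
  set rb2 : (j : H × H) → Coalgebra.Repr k (rb.right j) (H × H) :=
    fun j => Coalgebra.Repr.arbitrary k (rb.right j)
  set la : (i : H × H) → Coalgebra.Repr k (ra.left i) (H × H) :=
    fun i => Coalgebra.Repr.arbitrary k (ra.left i)
  set lb : (j : H × H) → Coalgebra.Repr k (rb.left j) (H × H) :=
    fun j => Coalgebra.Repr.arbitrary k (rb.left j)
  have ha := (lTensor_comul_expand_right ra ra2).symm.trans (lTensor_comul_expand_left ra la)
  have hb := (lTensor_comul_expand_right rb rb2).symm.trans (lTensor_comul_expand_left rb lb)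
  have h2 := congrArg Φ (congrArg₂ (fun u v => u ⊗ₜ[k] v) ha hb)
  simp only [TensorProduct.sum_tmul, TensorProduct.tmul_sum, map_sum, hΦ] at h2
  conv at h2 => lhs; rw [sum4_comm]
  conv at h2 => rhs; rw [sum4_comm]
  have W1 : (∑ i ∈ ra.index, ∑ p ∈ (ra2 i).index, ∑ j ∈ rb.index, ∑ q ∈ (rb2 j).index,
        antipode (R := k) (ra.left i * rb.left j) * ((ra2 i).left p * ((rb2 j).left q *
          (antipode (R := k) ((rb2 j).right q) * antipode (R := k) ((ra2 i).right p)))))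
      = antipode (R := k) (a * b) := by
    calc
      _ = ∑ i ∈ ra.index, ∑ p ∈ (ra2 i).index, ∑ j ∈ rb.index,
            counit (R := k) (rb.right j) •
              (antipode (R := k) (ra.left i * rb.left j) *
                ((ra2 i).left p * antipode (R := k) ((ra2 i).right p))) := by
          refine Finset.sum_congr rfl fun i _ => Finset.sum_congr rfl fun p _ =>
            Finset.sum_congr rfl fun j _ => ?_
          rw [← Finset.mul_sum, ← Finset.mul_sum, sum_mul_antipode_mul (rb2 j),
            mul_smul_comm, mul_smul_comm]
      _ = ∑ i ∈ ra.index, ∑ j ∈ rb.index,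
            counit (R := k) (rb.right j) • counit (R := k) (ra.right i) •
              antipode (R := k) (ra.left i * rb.left j) := by
          refine Finset.sum_congr rfl fun i _ => ?_
          rw [Finset.sum_comm]
          refine Finset.sum_congr rfl fun j _ => ?_
          rw [← Finset.smul_sum, ← Finset.mul_sum, sum_mul_antipode_eq_smul (ra2 i),
            mul_smul_comm, mul_one]
      _ = antipode (R := k) (a * b) := by
          conv_rhs => rw [← repr_sum_smul_left ra, ← repr_sum_smul_left rb]
          rw [Finset.sum_mul_sum, map_sum]
          refine Finset.sum_congr rfl fun i _ => ?_
          rw [map_sum]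
          refine Finset.sum_congr rfl fun j _ => ?_
          rw [smul_mul_assoc, mul_smul_comm, map_smul, map_smul, smul_comm]
  have W2 : (∑ i ∈ ra.index, ∑ p ∈ (la i).index, ∑ j ∈ rb.index, ∑ q ∈ (lb j).index,
        antipode (R := k) ((la i).left p * (lb j).left q) * ((la i).right p * ((lb j).right q *
          (antipode (R := k) (rb.right j) * antipode (R := k) (ra.right i)))))
      = antipode (R := k) b * antipode (R := k) a := by
    calc
      _ = ∑ i ∈ ra.index, ∑ j ∈ rb.index,
            (counit (R := k) (ra.left i) * counit (R := k) (rb.left j)) •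
              (antipode (R := k) (rb.right j) * antipode (R := k) (ra.right i)) := by
          refine Finset.sum_congr rfl fun i _ => ?_
          rw [Finset.sum_comm]
          refine Finset.sum_congr rfl fun j _ => ?_
          exact sum_antipode_left_mul (la i) (lb j) _
      _ = antipode (R := k) b * antipode (R := k) a := by
          conv_rhs => rw [← repr_sum_smul_right ra, ← repr_sum_smul_right rb, map_sum, map_sum]
          rw [Finset.sum_mul_sum, Finset.sum_comm]
          refine Finset.sum_congr rfl fun i _ => Finset.sum_congr rfl fun j _ => ?_
          rw [map_smul, map_smul, smul_mul_assoc, mul_smul_comm, smul_smul, mul_comm]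
  rw [← W1, h2, W2]

section CommMul
variable (k H)
lemma commMul (u v : H ⊗[k] H) :
    (TensorProduct.comm k H H) (u * v)
      = (TensorProduct.comm k H H) u * (TensorProduct.comm k H H) v :=
  map_mul (Algebra.TensorProduct.comm k H H) u v

lemma commComm (x : H ⊗[k] H) :
    (TensorProduct.comm k H H) ((TensorProduct.comm k H H) x) = x := by
  induction x using TensorProduct.induction_on with
  | zero => simp
  | tmul a b => simp
  | add x y hx hy => simp [map_add, hx, hy]
end CommMul

end AuxHopf

noncomputable section

variable (k : Type*) [Field k] (H : Type*) [Ring H] [HopfAlgebra k H]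

variable (A : Type*) [Ring A] [Algebra k A]

section AuxMain
open Coalgebra HopfAlgebra

lemma bcomp_apply {A B C : Type*} [AddCommMonoid A] [AddCommMonoid B] [AddCommMonoid C]
    [Module k A] [Module k B] [Module k C]
    (U : H →ₗ[k] B →ₗ[k] C) (V : H →ₗ[k] A →ₗ[k] B) (x y : H) (a : A) :
    bcomp k H U V x y a = U x (V y a) := rfl

lemma sandwich_tmul {E : Type*} [Ring E] [Algebra k E] (α β : H →ₗ[k] E) (x y : H) (a : E) :
    sandwich k H α β (x ⊗ₜ y) a = α x * (a * β y) := rfl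

lemma adAct_repr {E : Type*} [Ring E] [Algebra k E] (ρ : H →ₗ[k] E) {h : H} {ι : Type*}
    (r : Coalgebra.Repr k h ι) (a : E) :
    adAct k H ρ h a = ∑ i ∈ r.index,
      ρ (r.left i) * (a * ρ (HopfAlgebra.antipode (R := k) (r.right i))) := by
  have h0 : adAct k H ρ h a
      = sandwich k H ρ (ρ ∘ₗ anti k H) (Coalgebra.comul (R := k) h) a := rfl
  rw [h0, ← r.eq, map_sum, LinearMap.sum_apply]
  rfl

lemma ad_ad {S : Type*} [Ring S] [Algebra k S] (ρ : H →ₐ[k] S) (g h : H) (x : S) :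
    adAct k H ρ.toLinearMap g (adAct k H ρ.toLinearMap h x)
      = adAct k H ρ.toLinearMap (g * h) x := by
  classical
  set rg := Coalgebra.Repr.arbitrary k g
  set rh := Coalgebra.Repr.arbitrary k h
  rw [adAct_repr k H ρ.toLinearMap rg, adAct_repr k H ρ.toLinearMap rh,
    adAct_repr k H ρ.toLinearMap (reprMul rg rh)]
  simp only [reprMul]
  rw [Finset.sum_product]
  refine Finset.sum_congr rfl fun i _ => ?_
  rw [Finset.sum_mul, Finset.mul_sum]
  refine Finset.sum_congr rfl fun j _ => ?_
  simp only [AlgHom.toLinearMap_apply, map_mul, antipode_mul_rev, mul_assoc]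

lemma rho_mul {S : Type*} [Ring S] [Algebra k S] (ρ : H →ₐ[k] S) {h : H} {ι : Type*}
    (r : Coalgebra.Repr k h ι) (x : S) :
    ρ h * x = ∑ i ∈ r.index,
      adAct k H ρ.toLinearMap (r.left i) x * ρ (r.right i) := by
  classical
  obtain ⟨Θ, hΘ⟩ : ∃ Θ : H ⊗[k] (H ⊗[k] H) →ₗ[k] S, ∀ x₁ y z : H,
      Θ (x₁ ⊗ₜ (y ⊗ₜ z)) = ρ x₁ * (x * ρ (HopfAlgebra.antipode (R := k) y * z)) :=
    ⟨TensorProduct.lift ((LinearMap.mul k S).compl₂ (LinearMap.mulLeft k x)) ∘ₗ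
        TensorProduct.map ρ.toLinearMap (ρ.toLinearMap ∘ₗ LinearMap.mul' k H ∘ₗ
          TensorProduct.map (HopfAlgebra.antipode (R := k)) LinearMap.id),
      fun x₁ y z => by
        simp [LinearMap.mul'_apply]⟩
  set li : (i : ι) → Coalgebra.Repr k (r.left i) (H × H) :=
    fun i => Coalgebra.Repr.arbitrary k (r.left i)
  set ri : (i : ι) → Coalgebra.Repr k (r.right i) (H × H) :=
    fun i => Coalgebra.Repr.arbitrary k (r.right i)
  have h1 : ∑ i ∈ r.index, adAct k H ρ.toLinearMap (r.left i) x * ρ (r.right i)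
      = Θ ((Coalgebra.comul (R := k)).lTensor H (Coalgebra.comul h)) := by
    rw [lTensor_comul_expand_left r li, map_sum]
    refine Finset.sum_congr rfl fun i _ => ?_
    rw [map_sum, adAct_repr k H ρ.toLinearMap (li i), Finset.sum_mul]
    refine Finset.sum_congr rfl fun p _ => ?_
    rw [hΘ]
    simp only [AlgHom.toLinearMap_apply, map_mul, mul_assoc]
  have h2 : Θ ((Coalgebra.comul (R := k)).lTensor H (Coalgebra.comul h)) = ρ h * x := by
    rw [lTensor_comul_expand_right r ri, map_sum]
    have hterm : ∀ i ∈ r.index, Θ (∑ p ∈ (ri i).index,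
        r.left i ⊗ₜ[k] ((ri i).left p ⊗ₜ[k] (ri i).right p))
        = Coalgebra.counit (R := k) (r.right i) • (ρ (r.left i) * x) := by
      intro i _
      rw [map_sum]
      simp only [hΘ]
      rw [← Finset.mul_sum, ← Finset.mul_sum, ← map_sum, sum_antipode_mul_eq_smul (ri i)]
      rw [map_smul, map_one, mul_smul_comm, mul_one, mul_smul_comm]
    rw [Finset.sum_congr rfl hterm]
    have hρh : (ρ h : S) = ∑ i ∈ r.index, Coalgebra.counit (R := k) (r.right i) • ρ (r.left i) := by
      conv_lhs => rw [← repr_sum_smul_left r]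
      rw [map_sum]
      exact Finset.sum_congr rfl fun i _ => by rw [map_smul]
    rw [hρh, Finset.sum_mul]
    exact Finset.sum_congr rfl fun i _ => by rw [smul_mul_assoc]
  rw [h1, h2]

lemma rTensor_comm_rel (Rc : H ⊗[k] H)
    (hrel : ∀ g : H, Coalgebra.comul (R := k) g * Rc
      = Rc * (TensorProduct.comm k H H) (Coalgebra.comul (R := k) g)) (w : H ⊗[k] H) :
    (Coalgebra.comul (R := k)).rTensor H w * (Rc ⊗ₜ[k] (1 : H))
      = (Rc ⊗ₜ[k] (1 : H)) *
        (((TensorProduct.comm k H H).toLinearMap ∘ₗ Coalgebra.comul (R := k)).rTensor H w) := by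
  induction w using TensorProduct.induction_on with
  | zero => simp
  | tmul g c =>
      rw [LinearMap.rTensor_tmul, LinearMap.rTensor_tmul,
        Algebra.TensorProduct.tmul_mul_tmul, Algebra.TensorProduct.tmul_mul_tmul,
        one_mul, mul_one, LinearMap.comp_apply, LinearEquiv.coe_coe, hrel]
  | add u v hu hv => rw [map_add, map_add, add_mul, mul_add, hu, hv]

end AuxMain

/-- Let `R ∈ H ⊗ H` be invertible with `R Δ(h) = Δᵒᵖ(h) R`, let
`ρ : H → S` be an algebra map with adjoint action `ad`, and for `ξ ∈ S` let
`D(ξ) = ξ⊗1 + Σ ρ(R₂) ⊗ ad(R₁)(ξ)`. Then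
`(ρ⊗ρ)(Δ(h))·D(ξ) = Σ D(ad(h⁽¹⁾)(ξ))·(ρ⊗ρ)(Δ(h⁽²⁾))`. -/
theorem quasi_primitive_comul_cross_relation
    (R Rinv : H ⊗[k] H) (hR1 : R * Rinv = 1) (hR2 : Rinv * R = 1)
    (hRcomul : ∀ h : H,
      R * comulL k H h = (TensorProduct.comm k H H) (comulL k H h) * R)
    (S : Type*) [Ring S] [Algebra k S] (ρ : H →ₐ[k] S)
    (D : S →ₗ[k] S ⊗[k] S)
    (hD : D = (TensorProduct.mk k S S).flip 1 +
      TensorProduct.lift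
        (bcomp k H ((TensorProduct.mk k S S) ∘ₗ ρ.toLinearMap) (adAct k H ρ.toLinearMap))
        ((TensorProduct.comm k H H) R)) :
    ∀ (h : H) (ξ : S),
      (TensorProduct.map ρ.toLinearMap ρ.toLinearMap) (comulL k H h) * D ξ
      = TensorProduct.lift
          ((bcomp k H
              ((LinearMap.mul k (S ⊗[k] S)).flip ∘ₗ
                (TensorProduct.map ρ.toLinearMap ρ.toLinearMap) ∘ₗ comulL k H)
              ((LinearMap.llcomp k S S (S ⊗[k] S) D) ∘ₗ adAct k H ρ.toLinearMap)).flip)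
          (comulL k H h) ξ := by
  classical
  intro h ξ
  obtain ⟨T, hT⟩ := TensorProduct.exists_finset (R := k) R
  set r := Coalgebra.Repr.arbitrary k h with hrdef
  set rr : (i : H × H) → Coalgebra.Repr k (r.right i) (H × H) :=
    fun i => Coalgebra.Repr.arbitrary k (r.right i) with hrrdef
  set li : (i : H × H) → Coalgebra.Repr k (r.left i) (H × H) :=
    fun i => Coalgebra.Repr.arbitrary k (r.left i) with hlidef
  have hDapply : ∀ η : S, D η = η ⊗ₜ[k] (1 : S)
      + ∑ s ∈ T, ρ s.2 ⊗ₜ[k] adAct k H ρ.toLinearMap s.1 η := by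
    intro η
    rw [hD, LinearMap.add_apply]
    congr 1
    rw [hT, map_sum, map_sum, LinearMap.sum_apply]
    refine Finset.sum_congr rfl fun s _ => ?_
    rw [TensorProduct.comm_tmul]
    rfl
  have hLHS : (TensorProduct.map ρ.toLinearMap ρ.toLinearMap) (comulL k H h) * D ξ
      = (∑ i ∈ r.index, (ρ (r.left i) * ξ) ⊗ₜ[k] ρ (r.right i))
        + ∑ i ∈ r.index, ∑ s ∈ T,
            (ρ (r.left i) * ρ s.2) ⊗ₜ[k]
              (ρ (r.right i) * adAct k H ρ.toLinearMap s.1 ξ) := by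
    have hcl : comulL k H h = Coalgebra.comul (R := k) h := rfl
    rw [hcl, ← r.eq, map_sum, Finset.sum_mul, ← Finset.sum_add_distrib]
    refine Finset.sum_congr rfl fun i _ => ?_
    rw [TensorProduct.map_tmul, hDapply ξ, mul_add, Finset.mul_sum]
    congr 1
    · rw [Algebra.TensorProduct.tmul_mul_tmul, mul_one]
      simp only [AlgHom.toLinearMap_apply]
    · refine Finset.sum_congr rfl fun s _ => ?_
      rw [Algebra.TensorProduct.tmul_mul_tmul]
      simp only [AlgHom.toLinearMap_apply]
  have hRHS : TensorProduct.lift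
        ((bcomp k H
            ((LinearMap.mul k (S ⊗[k] S)).flip ∘ₗ
              (TensorProduct.map ρ.toLinearMap ρ.toLinearMap) ∘ₗ comulL k H)
            ((LinearMap.llcomp k S S (S ⊗[k] S) D) ∘ₗ adAct k H ρ.toLinearMap)).flip)
        (comulL k H h) ξ
      = ∑ i ∈ r.index, D (adAct k H ρ.toLinearMap (r.left i) ξ) *
          (TensorProduct.map ρ.toLinearMap ρ.toLinearMap)
            (Coalgebra.comul (R := k) (r.right i)) := by
    have hcl : comulL k H h = Coalgebra.comul (R := k) h := rfl
    rw [hcl, ← r.eq, map_sum, LinearMap.sum_apply]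
    exact Finset.sum_congr rfl fun i _ => rfl
  obtain ⟨Θ₁, hΘ₁⟩ : ∃ Θ₁ : H ⊗[k] (H ⊗[k] H) →ₗ[k] S ⊗[k] S, ∀ x y z : H,
      Θ₁ (x ⊗ₜ (y ⊗ₜ z)) = (adAct k H ρ.toLinearMap x ξ * ρ y) ⊗ₜ[k] ρ z :=
    ⟨(TensorProduct.map
        (LinearMap.mul' k S ∘ₗ
          TensorProduct.map ((adAct k H ρ.toLinearMap).flip ξ) ρ.toLinearMap)
        ρ.toLinearMap) ∘ₗ (TensorProduct.assoc k H H H).symm.toLinearMap,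
      fun x y z => by simp [LinearMap.mul'_apply]⟩
  obtain ⟨Θ₂, hΘ₂⟩ : ∃ Θ₂ : (H ⊗[k] H) ⊗[k] H →ₗ[k] S ⊗[k] S, ∀ y x z : H,
      Θ₂ ((y ⊗ₜ x) ⊗ₜ z) = ρ y ⊗ₜ[k] (adAct k H ρ.toLinearMap x ξ * ρ z) :=
    ⟨(TensorProduct.map ρ.toLinearMap
        (LinearMap.mul' k S ∘ₗ
          TensorProduct.map ((adAct k H ρ.toLinearMap).flip ξ) ρ.toLinearMap))
        ∘ₗ (TensorProduct.assoc k H H H).toLinearMap,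
      fun y x z => by simp [LinearMap.mul'_apply]⟩
  have hB1 : ∑ i ∈ r.index, (adAct k H ρ.toLinearMap (r.left i) ξ ⊗ₜ[k] (1 : S)) *
        (TensorProduct.map ρ.toLinearMap ρ.toLinearMap)
          (Coalgebra.comul (R := k) (r.right i))
      = Θ₁ ((Coalgebra.comul (R := k)).lTensor H (Coalgebra.comul h)) := by
    rw [lTensor_comul_expand_right r rr, map_sum]
    refine Finset.sum_congr rfl fun i _ => ?_
    rw [← (rr i).eq, map_sum, Finset.mul_sum, map_sum]
    refine Finset.sum_congr rfl fun q _ => ?_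
    rw [TensorProduct.map_tmul, Algebra.TensorProduct.tmul_mul_tmul, one_mul, hΘ₁]
    simp only [AlgHom.toLinearMap_apply]
  have hA1 : ∑ i ∈ r.index, (ρ (r.left i) * ξ) ⊗ₜ[k] ρ (r.right i)
      = Θ₁ ((Coalgebra.comul (R := k)).lTensor H (Coalgebra.comul h)) := by
    rw [lTensor_comul_expand_left r li, map_sum]
    refine Finset.sum_congr rfl fun i _ => ?_
    rw [map_sum, rho_mul k H ρ (li i) ξ, TensorProduct.sum_tmul]
    exact Finset.sum_congr rfl fun p _ => (hΘ₁ _ _ _).symm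
  have hrel : ∀ g : H, Coalgebra.comul (R := k) g * (TensorProduct.comm k H H) R
      = (TensorProduct.comm k H H) R *
        (TensorProduct.comm k H H) (Coalgebra.comul (R := k) g) := by
    intro g
    have h1 : R * Coalgebra.comul (R := k) g
        = (TensorProduct.comm k H H) (Coalgebra.comul (R := k) g) * R := hRcomul g
    have h2 := congrArg (TensorProduct.comm k H H) h1
    rw [commMul, commMul, commComm] at h2
    exact h2.symm
  have hcR : (TensorProduct.comm k H H) R ⊗ₜ[k] (1 : H)
      = ∑ s ∈ T, (s.2 ⊗ₜ[k] s.1) ⊗ₜ[k] (1 : H) := by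
    rw [hT, map_sum, TensorProduct.sum_tmul]
    simp only [TensorProduct.comm_tmul]
  have hE' : (((TensorProduct.comm k H H).toLinearMap ∘ₗ Coalgebra.comul (R := k)).rTensor H)
        (Coalgebra.comul h)
      = ∑ i ∈ r.index, ∑ q ∈ (rr i).index,
          ((rr i).left q ⊗ₜ[k] r.left i) ⊗ₜ[k] (rr i).right q := by
    rw [LinearMap.rTensor_comp, LinearMap.comp_apply, rTensor_comul_expand_right r rr,
      map_sum]
    refine Finset.sum_congr rfl fun i _ => ?_
    rw [map_sum]
    exact Finset.sum_congr rfl fun q _ => by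
      rw [LinearMap.rTensor_tmul, LinearEquiv.coe_coe, TensorProduct.comm_tmul]
  have hCL : Θ₂ ((Coalgebra.comul (R := k)).rTensor H (Coalgebra.comul h) *
        ((TensorProduct.comm k H H) R ⊗ₜ[k] (1 : H)))
      = ∑ i ∈ r.index, ∑ q ∈ (rr i).index, ∑ s ∈ T,
          ρ (r.left i * s.2) ⊗ₜ[k]
            (adAct k H ρ.toLinearMap ((rr i).left q * s.1) ξ * ρ ((rr i).right q)) := by
    rw [rTensor_comul_expand_right r rr, hcR, Finset.sum_mul, map_sum]
    refine Finset.sum_congr rfl fun i _ => ?_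
    rw [Finset.sum_mul, map_sum]
    refine Finset.sum_congr rfl fun q _ => ?_
    rw [Finset.mul_sum, map_sum]
    refine Finset.sum_congr rfl fun s _ => ?_
    rw [Algebra.TensorProduct.tmul_mul_tmul, Algebra.TensorProduct.tmul_mul_tmul,
      mul_one, hΘ₂]
  have hCR : Θ₂ (((TensorProduct.comm k H H) R ⊗ₜ[k] (1 : H)) *
        (((TensorProduct.comm k H H).toLinearMap ∘ₗ Coalgebra.comul (R := k)).rTensor H)
          (Coalgebra.comul h))
      = ∑ s ∈ T, ∑ i ∈ r.index, ∑ q ∈ (rr i).index,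
          ρ (s.2 * (rr i).left q) ⊗ₜ[k]
            (adAct k H ρ.toLinearMap (s.1 * r.left i) ξ * ρ ((rr i).right q)) := by
    rw [hE', hcR, Finset.sum_mul, map_sum]
    refine Finset.sum_congr rfl fun s _ => ?_
    rw [Finset.mul_sum, map_sum]
    refine Finset.sum_congr rfl fun i _ => ?_
    rw [Finset.mul_sum, map_sum]
    refine Finset.sum_congr rfl fun q _ => ?_
    rw [Algebra.TensorProduct.tmul_mul_tmul, Algebra.TensorProduct.tmul_mul_tmul,
      one_mul, hΘ₂]
  have hA2 : ∑ i ∈ r.index, ∑ s ∈ T,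
        (ρ (r.left i) * ρ s.2) ⊗ₜ[k] (ρ (r.right i) * adAct k H ρ.toLinearMap s.1 ξ)
      = ∑ i ∈ r.index, ∑ q ∈ (rr i).index, ∑ s ∈ T,
          ρ (r.left i * s.2) ⊗ₜ[k]
            (adAct k H ρ.toLinearMap ((rr i).left q * s.1) ξ * ρ ((rr i).right q)) := by
    refine Finset.sum_congr rfl fun i _ => ?_
    rw [Finset.sum_comm]
    refine Finset.sum_congr rfl fun s _ => ?_
    rw [rho_mul k H ρ (rr i) (adAct k H ρ.toLinearMap s.1 ξ), TensorProduct.tmul_sum,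
      ← map_mul]
    refine Finset.sum_congr rfl fun q _ => ?_
    rw [ad_ad k H ρ]
  have hB2 : ∑ i ∈ r.index, ∑ s ∈ T,
        (ρ s.2 ⊗ₜ[k] adAct k H ρ.toLinearMap s.1 (adAct k H ρ.toLinearMap (r.left i) ξ)) *
          (TensorProduct.map ρ.toLinearMap ρ.toLinearMap)
            (Coalgebra.comul (R := k) (r.right i))
      = ∑ s ∈ T, ∑ i ∈ r.index, ∑ q ∈ (rr i).index,
          ρ (s.2 * (rr i).left q) ⊗ₜ[k]
            (adAct k H ρ.toLinearMap (s.1 * r.left i) ξ * ρ ((rr i).right q)) := by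
    rw [Finset.sum_comm]
    refine Finset.sum_congr rfl fun s _ => ?_
    refine Finset.sum_congr rfl fun i _ => ?_
    rw [← (rr i).eq, map_sum, Finset.mul_sum]
    refine Finset.sum_congr rfl fun q _ => ?_
    rw [TensorProduct.map_tmul, Algebra.TensorProduct.tmul_mul_tmul, ad_ad k H ρ]
    simp only [AlgHom.toLinearMap_apply]
    rw [← map_mul]
  rw [hLHS, hRHS]
  have hsplit : ∑ i ∈ r.index, D (adAct k H ρ.toLinearMap (r.left i) ξ) *
        (TensorProduct.map ρ.toLinearMap ρ.toLinearMap)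
          (Coalgebra.comul (R := k) (r.right i))
      = (∑ i ∈ r.index, (adAct k H ρ.toLinearMap (r.left i) ξ ⊗ₜ[k] (1 : S)) *
          (TensorProduct.map ρ.toLinearMap ρ.toLinearMap)
            (Coalgebra.comul (R := k) (r.right i)))
        + ∑ i ∈ r.index, ∑ s ∈ T,
            (ρ s.2 ⊗ₜ[k] adAct k H ρ.toLinearMap s.1 (adAct k H ρ.toLinearMap (r.left i) ξ)) *
              (TensorProduct.map ρ.toLinearMap ρ.toLinearMap)
                (Coalgebra.comul (R := k) (r.right i)) := by
    rw [← Finset.sum_add_distrib]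
    refine Finset.sum_congr rfl fun i _ => ?_
    rw [hDapply, add_mul, Finset.sum_mul]
  rw [hsplit]
  congr 1
  · rw [hA1, hB1]
  · rw [hA2, hB2, ← hCL, ← hCR]
    exact congrArg Θ₂ (rTensor_comm_rel k H ((TensorProduct.comm k H H) R) hrel
      (Coalgebra.comul h))

end
end
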